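/- arXiv:2004.11796 — 4 statements merged into one kernel-verified Lean document; each statement's English description precedes it below -/
import Mathlib

section
/- Let k ≥ 1 and let Ψ be a Max-kSAT instance with m_j j-clauses for j = 1,…,k. Then val_Ψ ≤ min{ Σ_{j=1}^k m_j, bias(Ψ)/2 + Σ_{j=1}^k ((2^j + j − 2)/2^j)·m_j }. (Lemma 6.1.) -/
/-- A `Max-kSAT` clause: a disjunction of between 1 and `k` literals on pairwise
distinct variables. A literal on variable `i` with polarity `b` (`b = true` for `xᵢ`,
`b = false` for `¬xᵢ`) evaluates to `σ i == b`. -/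
structure KClause (n k : ℕ) where
  lits : List (Fin n × Bool)
  nodup : (lits.map Prod.fst).Nodup
  len_pos : 0 < lits.length
  len_le : lits.length ≤ k

/-- A clause is satisfied iff at least one of its literals receives value 1. -/
def KClause.eval {n k : ℕ} (C : KClause n k) (σ : Fin n → Bool) : Bool :=
  C.lits.any (fun l => σ l.1 == l.2)

/-- The number of clauses of `Ψ` satisfied by `σ`, i.e. `val_Ψ(σ)`. -/
def satCount {n k : ℕ} (Ψ : List (KClause n k)) (σ : Fin n → Bool) : ℕ :=
  Ψ.countP (fun C => C.eval σ)

/-- `val_Ψ`: the maximum number of simultaneously satisfiable clauses. -/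
def maxVal {n k : ℕ} (Ψ : List (KClause n k)) : ℕ :=
  Finset.univ.sup (fun σ : Fin n → Bool => satCount Ψ σ)

/-- `m_r`: the number of `r`-clauses (clauses on exactly `r` variables). -/
def numLen {n k : ℕ} (Ψ : List (KClause n k)) (r : ℕ) : ℕ :=
  Ψ.countP (fun C => C.lits.length == r)

/-- The number of `r`-clauses containing the literal on variable `v` with
polarity `b` (so `pos_v^{(r)}` for `b = true` and `neg_v^{(r)}` for `b = false`). -/
def cntLit {n k : ℕ} (Ψ : List (KClause n k)) (v : Fin n) (b : Bool) (r : ℕ) : ℕ :=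
  Ψ.countP (fun C => decide (C.lits.length = r ∧ (v, b) ∈ C.lits))

/-- `bias(Ψ) = Σᵢ |Σ_{r=1}^k 2^{−(r−1)}·(posᵢ^{(r)} − negᵢ^{(r)})|`. -/
noncomputable def bias {n k : ℕ} (Ψ : List (KClause n k)) : ℝ :=
  ∑ v : Fin n,
    |∑ r ∈ Finset.Icc 1 k,
      ((cntLit Ψ v true r : ℝ) - (cntLit Ψ v false r : ℝ)) / 2 ^ (r - 1)|

/-!
Charge a clause of width `r` the amount `1 - 2 ^ (1 - r)` plus `2 ^ (1 - r)` for each of its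
literals made true by `σ`; this dominates the indicator that `σ` satisfies it. Regrouped by
variables, the literal part is `∑ᵥ W(v, σ v)`, where `W(v, b) = litWeight Ψ v b` is the
`2 ^ (1 - r)`-weighted number of clauses containing the literal `(v, b)`. Bounding `W(v, σ v)` by
the larger of `W(v, true)` and `W(v, false)`, i.e. by their mean plus half their difference, the
means add up to `∑ᵣ r 2 ^ (-r) mᵣ` and the half differences to `bias Ψ / 2`.
-/

lemma List.natCast_countP_eq_sum_map {α R : Type*} [AddCommMonoidWithOne R] (p : α → Bool)
    (l : List α) :
    (l.countP p : R) = (l.map fun a => if p a then 1 else 0).sum := by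
  induction l with
  | nil => simp
  | cons a l ih => by_cases h : p a <;> simp [h, ih, add_comm]

lemma List.sum_map_finset_sum_comm {α ι M : Type*} [AddCommMonoid M] (l : List α) (s : Finset ι)
    (f : α → ι → M) :
    (l.map fun a => ∑ i ∈ s, f a i).sum = ∑ i ∈ s, (l.map fun a => f a i).sum := by
  induction l with
  | nil => simp
  | cons a l ih => simp [ih, Finset.sum_add_distrib]

lemma List.Nodup.sum_map_eq_sum_ite {α M : Type*} [Fintype α] [DecidableEq α] [AddCommMonoid M]
    {l : List α} (hl : l.Nodup) (ω : α → M) :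
    (l.map ω).sum = ∑ a, if a ∈ l then ω a else 0 := by
  rw [← List.sum_toFinset ω hl, ← Finset.sum_filter]
  congr 1
  ext
  simp

lemma Bool.apply_le_add_add_abs_sub_div_two (f : Bool → ℝ) (b : Bool) :
    f b ≤ (f true + f false + |f true - f false|) / 2 := by
  cases b
  · linarith [neg_abs_le (f true - f false)]
  · linarith [le_abs_self (f true - f false)]

namespace KClause

variable {n k : ℕ}

lemma length_mem_Icc (C : KClause n k) : C.lits.length ∈ Finset.Icc 1 k :=
  Finset.mem_Icc.mpr ⟨C.len_pos, C.len_le⟩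

lemma lits_nodup (C : KClause n k) : C.lits.Nodup :=
  C.nodup.of_map _

def numTrue (C : KClause n k) (σ : Fin n → Bool) : ℕ :=
  C.lits.countP fun l => σ l.1 == l.2

lemma eval_eq_true_iff_numTrue_pos (C : KClause n k) (σ : Fin n → Bool) :
    C.eval σ = true ↔ 0 < C.numTrue σ := by
  rw [numTrue, List.countP_pos_iff, eval, List.any_eq_true]

/-- A satisfied clause has a true literal, and `2 / 2 ^ r ≤ 1`. -/
lemma indicator_eval_le (C : KClause n k) (σ : Fin n → Bool) :
    (if C.eval σ then 1 else 0 : ℝ) ≤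
      1 - 2 / 2 ^ C.lits.length + 2 / 2 ^ C.lits.length * C.numTrue σ := by
  have hw : 2 / (2 : ℝ) ^ C.lits.length ≤ 1 := by
    rw [div_le_one (by positivity)]
    exact le_self_pow₀ one_le_two C.len_pos.ne'
  have hw₀ : 0 ≤ 2 / (2 : ℝ) ^ C.lits.length := by positivity
  by_cases h : C.eval σ
  · have : (1 : ℝ) ≤ C.numTrue σ := by exact_mod_cast (C.eval_eq_true_iff_numTrue_pos σ).mp h
    rw [if_pos h]
    nlinarith
  · have : C.numTrue σ = 0 := by
      simpa [eval_eq_true_iff_numTrue_pos] using h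
    simp [h, this, hw]

end KClause

section Counting

variable {n k : ℕ}

lemma sum_Icc_mul_numLen (Ψ : List (KClause n k)) (g : ℕ → ℝ) :
    ∑ r ∈ Finset.Icc 1 k, g r * numLen Ψ r = (Ψ.map fun C => g C.lits.length).sum := by
  simp only [numLen, List.natCast_countP_eq_sum_map, ← List.sum_map_mul_left,
    ← List.sum_map_finset_sum_comm]
  congr 1
  refine List.map_congr_left fun C _ => ?_
  simp [C.length_mem_Icc]

noncomputable def litWeight (Ψ : List (KClause n k)) (v : Fin n) (b : Bool) : ℝ :=
  ∑ r ∈ Finset.Icc 1 k, 2 / 2 ^ r * (cntLit Ψ v b r : ℝ)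

lemma sum_mul_litWeight (Ψ : List (KClause n k)) (ω : Fin n × Bool → ℝ) :
    ∑ l : Fin n × Bool, ω l * litWeight Ψ l.1 l.2 =
      (Ψ.map fun C => 2 / 2 ^ C.lits.length * (C.lits.map ω).sum).sum := by
  simp only [litWeight, cntLit, List.natCast_countP_eq_sum_map, ← List.sum_map_mul_left,
    ← List.sum_map_finset_sum_comm]
  congr 1
  refine List.map_congr_left fun C _ => ?_
  rw [C.lits_nodup.sum_map_eq_sum_ite]
  refine Finset.sum_congr rfl fun l _ => ?_
  by_cases hl : l ∈ C.lits
  · simp [hl, C.length_mem_Icc, mul_comm]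
  · simp [hl]

lemma sum_litWeight_apply (Ψ : List (KClause n k)) (σ : Fin n → Bool) :
    ∑ v, litWeight Ψ v (σ v) =
      (Ψ.map fun C => 2 / 2 ^ C.lits.length * (C.numTrue σ : ℝ)).sum := by
  have h := sum_mul_litWeight Ψ fun l => if σ l.1 == l.2 then 1 else 0
  simp only [Fintype.sum_prod_type, Fintype.sum_bool] at h
  simp only [KClause.numTrue, List.natCast_countP_eq_sum_map, ← h]
  refine Finset.sum_congr rfl fun v _ => ?_
  cases σ v <;> simp

lemma sum_litWeight_add (Ψ : List (KClause n k)) :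
    ∑ v, (litWeight Ψ v true + litWeight Ψ v false) =
      ∑ r ∈ Finset.Icc 1 k, 2 * r / 2 ^ r * (numLen Ψ r : ℝ) := by
  have h := sum_mul_litWeight Ψ fun _ => 1
  simp only [Fintype.sum_prod_type, Fintype.sum_bool, one_mul, List.map_const',
    List.sum_replicate, nsmul_eq_mul, mul_one] at h
  rw [h, sum_Icc_mul_numLen]
  congr 1
  refine List.map_congr_left fun C _ => ?_
  ring

lemma bias_eq_sum_abs_litWeight_sub (Ψ : List (KClause n k)) :
    bias Ψ = ∑ v, |litWeight Ψ v true - litWeight Ψ v false| := by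
  refine Finset.sum_congr rfl fun v _ => ?_
  rw [litWeight, litWeight, ← Finset.sum_sub_distrib]
  congr 1
  refine Finset.sum_congr rfl fun r hr => ?_
  obtain ⟨r, rfl⟩ := Nat.exists_eq_add_of_le' (Finset.mem_Icc.mp hr).1
  rw [Nat.add_sub_cancel, pow_succ]
  field_simp

lemma satCount_le_sum_add_sum_litWeight (Ψ : List (KClause n k)) (σ : Fin n → Bool) :
    (satCount Ψ σ : ℝ) ≤
      ∑ r ∈ Finset.Icc 1 k, (1 - 2 / 2 ^ r) * (numLen Ψ r : ℝ) + ∑ v, litWeight Ψ v (σ v) :=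
  calc (satCount Ψ σ : ℝ) = (Ψ.map fun C => if C.eval σ then 1 else 0).sum :=
        List.natCast_countP_eq_sum_map _ _
    _ ≤ (Ψ.map fun C =>
          1 - 2 / 2 ^ C.lits.length + 2 / 2 ^ C.lits.length * (C.numTrue σ : ℝ)).sum :=
        List.sum_le_sum fun C _ => C.indicator_eval_le σ
    _ = _ := by rw [List.sum_map_add, sum_Icc_mul_numLen, sum_litWeight_apply]

lemma sum_litWeight_apply_le (Ψ : List (KClause n k)) (σ : Fin n → Bool) :
    ∑ v, litWeight Ψ v (σ v) ≤
      ∑ r ∈ Finset.Icc 1 k, r / 2 ^ r * (numLen Ψ r : ℝ) + bias Ψ / 2 :=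
  calc ∑ v, litWeight Ψ v (σ v)
      ≤ ∑ v, (litWeight Ψ v true + litWeight Ψ v false +
          |litWeight Ψ v true - litWeight Ψ v false|) / 2 :=
        Finset.sum_le_sum fun v _ =>
          Bool.apply_le_add_add_abs_sub_div_two (litWeight Ψ v) (σ v)
    _ = _ := by
        rw [← Finset.sum_div, Finset.sum_add_distrib, sum_litWeight_add,
          ← bias_eq_sum_abs_litWeight_sub, add_div, Finset.sum_div]
        congr 1
        refine Finset.sum_congr rfl fun r _ => ?_
        ring

end Counting

theorem ksat_upper_bound_general {n k : ℕ} (Ψ : List (KClause n k)) :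
    (maxVal Ψ : ℝ) ≤
      min (∑ j ∈ Finset.Icc 1 k, (numLen Ψ j : ℝ))
        (bias Ψ / 2 + ∑ j ∈ Finset.Icc 1 k,
          (((2 : ℝ) ^ j + (j : ℝ) - 2) / 2 ^ j) * (numLen Ψ j : ℝ)) := by
  obtain ⟨σ, -, hσ⟩ := Finset.exists_mem_eq_sup Finset.univ Finset.univ_nonempty (satCount Ψ)
  rw [maxVal, hσ]
  refine le_min ?_ ?_
  · calc (satCount Ψ σ : ℝ) ≤ Ψ.length := by exact_mod_cast List.countP_le_length
      _ = _ := by simpa using (sum_Icc_mul_numLen Ψ 1).symm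
  · calc (satCount Ψ σ : ℝ)
        ≤ ∑ r ∈ Finset.Icc 1 k, (1 - 2 / 2 ^ r) * (numLen Ψ r : ℝ) +
            (∑ r ∈ Finset.Icc 1 k, r / 2 ^ r * (numLen Ψ r : ℝ) + bias Ψ / 2) := by
          grw [satCount_le_sum_add_sum_litWeight, sum_litWeight_apply_le]
      _ = _ := by
          rw [← add_assoc, ← Finset.sum_add_distrib, add_comm]
          congr 1
          refine Finset.sum_congr rfl fun j _ => ?_
          field_simp
          ring

/-- Lemma 6.1: `val_Ψ ≤ min{ Σ_{j=1}^k m_j, bias(Ψ)/2 + Σ_{j=1}^k ((2^j + j − 2)/2^j)·m_j }`. -/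
theorem ksat_upper_bound {n k : ℕ} (hk : 1 ≤ k) (Ψ : List (KClause n k)) :
    (maxVal Ψ : ℝ) ≤
      min (∑ j ∈ Finset.Icc 1 k, (numLen Ψ j : ℝ))
        (bias Ψ / 2 + ∑ j ∈ Finset.Icc 1 k,
          (((2 : ℝ) ^ j + (j : ℝ) - 2) / 2 ^ j) * (numLen Ψ j : ℝ)) :=
  ksat_upper_bound_general Ψ
end

section
/- Let k ≥ 1 and let Ψ be a Max-kSAT instance with m_j j-clauses for j = 1,…,k. Then val_Ψ ≥ bias(Ψ)/2 + Σ_{j=1}^k (j/2^j)·m_j. (Lemma 6.2, part 1.) -/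
/-! Encode truth values as `±1` (`spin`) and let `δ v = Σ_r (pos_v^{(r)} - neg_v^{(r)}) / 2^{r-1}`.
For the assignment `σ v = [δ v ≥ 0]` the bias is the linear form `Σ_v spin (σ v) · δ v`.
Split clause by clause, an `r`-clause with `a` literals true under `σ` contributes
`(2a - r)/2^{r-1}` to it, hence `2a/2^r` to `bias/2 + Σ_j (j/2^j) m_j`. This is `0` if the
clause is unsatisfied and at most `2r/2^r ≤ 1` otherwise, so the whole sum is at most
`val_Ψ(σ)`. -/

open Finset

def spin (b : Bool) : ℝ := if b then 1 else -1

lemma spin_mul_spin (a b : Bool) : spin a * spin b = 2 * (if a = b then 1 else 0) - 1 := by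
  cases a <;> cases b <;> norm_num [spin]

lemma abs_eq_spin_mul (x : ℝ) : |x| = spin (decide (0 ≤ x)) * x := by
  by_cases hx : 0 ≤ x
  · simp [spin, hx, abs_of_nonneg hx]
  · simp [spin, hx, abs_of_neg (not_le.mp hx)]

section LitSign

variable {n : ℕ}

def litSign (L : List (Fin n × Bool)) (v : Fin n) : ℝ :=
  (if (v, true) ∈ L then 1 else 0) - (if (v, false) ∈ L then 1 else 0)

lemma litSign_cons {L : List (Fin n × Bool)} {w : Fin n} (b : Bool) (hw : ∀ c, (w, c) ∉ L)
    (v : Fin n) : litSign ((w, b) :: L) v = litSign L v + if v = w then spin b else 0 := by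
  by_cases hv : v = w
  · subst hv
    cases b <;> simp [litSign, spin, hw]
  · simp [litSign, hv]

lemma sum_spin_mul_litSign (σ : Fin n → Bool) {L : List (Fin n × Bool)}
    (hL : (L.map Prod.fst).Nodup) :
    ∑ v, spin (σ v) * litSign L v = 2 * (L.countP fun l => σ l.1 == l.2) - L.length := by
  induction L with
  | nil => simp [litSign]
  | cons l L ih =>
    obtain ⟨w, b⟩ := l
    rw [List.map_cons, List.nodup_cons] at hL
    have hw : ∀ c, (w, c) ∉ L := fun c hc => hL.1 (List.mem_map.mpr ⟨_, hc, rfl⟩)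
    simp only [litSign_cons b hw, mul_add, sum_add_distrib, ih hL.2, mul_ite, mul_zero,
      sum_ite_eq', mem_univ, if_true, spin_mul_spin, List.countP_cons, List.length_cons]
    split_ifs <;> simp_all <;> ring

end LitSign

section Clauses

variable {n k : ℕ}

lemma KClause.sum_spin_mul_litSign_div_add_le (σ : Fin n → Bool) (C : KClause n k) :
    (∑ v, spin (σ v) * litSign C.lits v) / 2 ^ (C.lits.length - 1) / 2
      + C.lits.length / 2 ^ C.lits.length ≤ if C.eval σ then 1 else 0 := by
  rw [sum_spin_mul_litSign σ C.nodup]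
  set r := C.lits.length
  set a := C.lits.countP fun l => σ l.1 == l.2
  have hr : 1 ≤ r := C.len_pos
  have hpow : (2 : ℝ) ^ r = 2 ^ (r - 1) * 2 := by rw [← pow_succ, Nat.sub_add_cancel hr]
  have hsum : (2 * a - r : ℝ) / 2 ^ (r - 1) / 2 + r / 2 ^ r = 2 * a / 2 ^ r := by
    rw [div_div, ← hpow]
    ring
  rw [hsum]
  split_ifs with hsat
  · have h2r : 2 * r ≤ 2 ^ r := by
      have := (r - 1).lt_two_pow_self
      rw [← Nat.sub_add_cancel hr, pow_succ]
      omega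
    have h2a : 2 * a ≤ 2 ^ r := (Nat.mul_le_mul_left 2 List.countP_le_length).trans h2r
    rw [div_le_one (by positivity)]
    exact_mod_cast h2a
  · have ha : a = 0 := by
      simp only [KClause.eval, Bool.not_eq_true, List.any_eq_false] at hsat
      exact List.countP_eq_zero.mpr fun l hl => by simpa using hsat l hl
    simp [ha]

noncomputable def litBias (Ψ : List (KClause n k)) (v : Fin n) : ℝ :=
  ∑ r ∈ Icc 1 k, ((cntLit Ψ v true r : ℝ) - (cntLit Ψ v false r : ℝ)) / 2 ^ (r - 1)

lemma KClause.length_mem_Icc_s12 (C : KClause n k) : C.lits.length ∈ Icc 1 k :=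
  mem_Icc.mpr ⟨C.len_pos, C.len_le⟩

lemma litBias_cons (C : KClause n k) (Ψ : List (KClause n k)) (v : Fin n) :
    litBias (C :: Ψ) v = litSign C.lits v / 2 ^ (C.lits.length - 1) + litBias Ψ v := by
  simp only [litBias, cntLit, List.countP_cons, decide_eq_true_eq]
  push_cast
  rw [add_comm (litSign _ _ / _)]
  simp only [add_sub_add_comm, add_div, sum_add_distrib]
  congr 1
  rw [sum_eq_single_of_mem _ C.length_mem_Icc_s12 fun r _ hr => by simp [Ne.symm hr]]
  simp [litSign]

lemma sum_numLen_cons (C : KClause n k) (Ψ : List (KClause n k)) :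
    ∑ j ∈ Icc 1 k, ((j : ℝ) / 2 ^ j) * (numLen (C :: Ψ) j : ℝ)
      = C.lits.length / 2 ^ C.lits.length
        + ∑ j ∈ Icc 1 k, ((j : ℝ) / 2 ^ j) * (numLen Ψ j : ℝ) := by
  simp only [numLen, List.countP_cons, beq_iff_eq]
  push_cast
  rw [add_comm]
  simp only [mul_add, sum_add_distrib]
  congr 1
  rw [sum_eq_single_of_mem _ C.length_mem_Icc_s12 fun r _ hr => by simp [Ne.symm hr]]
  simp

lemma satCount_cons (C : KClause n k) (Ψ : List (KClause n k)) (σ : Fin n → Bool) :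
    (satCount (C :: Ψ) σ : ℝ) = (if C.eval σ then 1 else 0) + satCount Ψ σ := by
  by_cases h : C.eval σ <;> simp [satCount, h, add_comm]

lemma sum_spin_mul_litBias_div_add_le_satCount (σ : Fin n → Bool) (Ψ : List (KClause n k)) :
    (∑ v, spin (σ v) * litBias Ψ v) / 2 + ∑ j ∈ Icc 1 k, ((j : ℝ) / 2 ^ j) * (numLen Ψ j : ℝ)
      ≤ satCount Ψ σ := by
  induction Ψ with
  | nil => simp [litBias, cntLit, numLen, satCount]
  | cons C Ψ ih =>
    have hC := C.sum_spin_mul_litSign_div_add_le σ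
    rw [sum_numLen_cons, satCount_cons]
    simp only [litBias_cons, mul_add, sum_add_distrib, add_div, mul_div_assoc', ← sum_div] at hC ⊢
    linarith

end Clauses

theorem ksat_bias_lower_bound_one_general {n k : ℕ} (Ψ : List (KClause n k)) :
    bias Ψ / 2 + ∑ j ∈ Finset.Icc 1 k, ((j : ℝ) / 2 ^ j) * (numLen Ψ j : ℝ)
      ≤ (maxVal Ψ : ℝ) := by
  let σ : Fin n → Bool := fun v => decide (0 ≤ litBias Ψ v)
  have hbias : bias Ψ = ∑ v, spin (σ v) * litBias Ψ v :=
    sum_congr rfl fun v _ => abs_eq_spin_mul (litBias Ψ v)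
  have hσ : satCount Ψ σ ≤ maxVal Ψ := le_sup (mem_univ σ)
  calc bias Ψ / 2 + ∑ j ∈ Icc 1 k, ((j : ℝ) / 2 ^ j) * (numLen Ψ j : ℝ)
      ≤ satCount Ψ σ := hbias ▸ sum_spin_mul_litBias_div_add_le_satCount σ Ψ
    _ ≤ maxVal Ψ := by exact_mod_cast hσ

/-- Lemma 6.2, part 1: `val_Ψ ≥ bias(Ψ)/2 + Σ_{j=1}^k (j/2^j)·m_j`. -/
theorem ksat_bias_lower_bound_one {n k : ℕ} (hk : 1 ≤ k) (Ψ : List (KClause n k)) :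
    bias Ψ / 2 + ∑ j ∈ Finset.Icc 1 k, ((j : ℝ) / 2 ^ j) * (numLen Ψ j : ℝ)
      ≤ (maxVal Ψ : ℝ) :=
  ksat_bias_lower_bound_one_general Ψ
end

section
/- Let k ≥ 2 and let Ψ be a Max-kSAT instance with m_j j-clauses for j = 1,…,k, and set D = Σ_{j=2}^k ((2^j − j − 1)/2^{j−2})·m_j. If D > 0 and bias(Ψ) ≤ D, then val_Ψ ≥ Σ_{j=1}^k (1 − 2^{−j})·m_j + bias(Ψ)²/(4D). (Lemma 6.2, part 2.) -/
open Finset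

def boolSign (b : Bool) : ℝ := if b then 1 else -1

@[simp] lemma boolSign_true : boolSign true = 1 := rfl

@[simp] lemma boolSign_false : boolSign false = -1 := rfl

lemma abs_boolSign (b : Bool) : |boolSign b| = 1 := by cases b <;> simp

noncomputable def biasedWeight {ι : Type*} [Fintype ι] (δ : ι → ℝ) (σ : ι → Bool) : ℝ :=
  ∏ i, (1 / 2 + boolSign (σ i) * δ i)

section BiasedWeight

variable {ι : Type*} [Fintype ι]

lemma sum_biasedWeight [DecidableEq ι] (δ : ι → ℝ) : ∑ σ, biasedWeight δ σ = 1 := by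
  simp only [biasedWeight]
  rw [← Fintype.prod_sum fun i b => 1 / 2 + boolSign b * δ i]
  refine prod_eq_one fun i _ => ?_
  rw [Fintype.sum_bool, boolSign_true, boolSign_false]
  ring

lemma biasedWeight_nonneg {δ : ι → ℝ} (hδ : ∀ i, |δ i| ≤ 1 / 2) (σ : ι → Bool) :
    0 ≤ biasedWeight δ σ :=
  prod_nonneg fun i _ => by
    have := neg_abs_le (boolSign (σ i) * δ i)
    rw [abs_mul, abs_boolSign, one_mul] at this
    linarith [hδ i]

lemma sum_biasedWeight_mul_le [DecidableEq ι] {δ : ι → ℝ} (hδ : ∀ i, |δ i| ≤ 1 / 2)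
    {f : (ι → Bool) → ℝ} {M : ℝ} (hf : ∀ σ, f σ ≤ M) :
    ∑ σ, biasedWeight δ σ * f σ ≤ M :=
  calc ∑ σ, biasedWeight δ σ * f σ ≤ ∑ σ, biasedWeight δ σ * M :=
        sum_le_sum fun σ _ => mul_le_mul_of_nonneg_left (hf σ) (biasedWeight_nonneg hδ σ)
    _ = M := by rw [← sum_mul, sum_biasedWeight δ, one_mul]

lemma sum_biasedWeight_mul_boole_forall_not_mem [DecidableEq ι] (δ : ι → ℝ)
    (S : Finset (ι × Bool)) (hS : ∀ i, (i, true) ∈ S → (i, false) ∉ S) :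
    ∑ σ, biasedWeight δ σ * (if ∀ i, (i, σ i) ∉ S then 1 else 0)
      = ∏ l ∈ S, (1 / 2 - boolSign l.2 * δ l.1) := by
  have hfactor : ∀ i, ∑ b, (1 / 2 + boolSign b * δ i) * (if (i, b) ∉ S then 1 else 0)
      = ∏ b, (if (i, b) ∈ S then 1 / 2 - boolSign b * δ i else 1) := by
    intro i
    rw [Fintype.sum_bool, Fintype.prod_bool, boolSign_true, boolSign_false]
    split_ifs
    all_goals first | exact absurd ‹(i, false) ∈ S› (hS i ‹(i, true) ∈ S›) | ring
  calc _ = ∑ σ : ι → Bool, ∏ i, (1 / 2 + boolSign (σ i) * δ i) *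
          (if (i, σ i) ∉ S then 1 else 0) := by
        refine sum_congr rfl fun σ _ => ?_
        rw [biasedWeight, ← Fintype.prod_boole, ← prod_mul_distrib]
    _ = ∏ i, ∑ b, (1 / 2 + boolSign b * δ i) * (if (i, b) ∉ S then 1 else 0) :=
        (Fintype.prod_sum fun i b => (1 / 2 + boolSign b * δ i) *
          if (i, b) ∉ S then 1 else 0).symm
    _ = _ := by
      simp only [hfactor]
      rw [← Fintype.prod_prod_type fun l => if l ∈ S then 1 / 2 - boolSign l.2 * δ l.1 else 1,
        prod_ite_mem, univ_inter]

end BiasedWeight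

lemma prod_one_sub_le {α : Type*} {s : Finset α} {x : α → ℝ} {δ : ℝ} (hδ : δ ≤ 1)
    (hx : ∀ a ∈ s, |x a| ≤ δ) :
    ∏ a ∈ s, (1 - x a) ≤ 1 - ∑ a ∈ s, x a + δ ^ 2 * (2 ^ #s - #s - 1) := by
  induction s using Finset.cons_induction with
  | empty => simp
  | cons a s ha ih =>
    rw [forall_mem_cons] at hx
    obtain ⟨hxa, hxs⟩ := hx
    have hδ0 : 0 ≤ δ := (abs_nonneg _).trans hxa
    have hsum : |∑ b ∈ s, x b| ≤ #s * δ := by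
      simpa using (abs_sum_le_sum_abs x s).trans (sum_le_card_nsmul s _ δ hxs)
    have hcross : x a * ∑ b ∈ s, x b ≤ δ * (#s * δ) :=
      calc x a * ∑ b ∈ s, x b ≤ |x a| * |∑ b ∈ s, x b| := abs_mul (x a) _ ▸ le_abs_self _
        _ ≤ δ * (#s * δ) := mul_le_mul hxa hsum (abs_nonneg _) hδ0
    have hxa1 : -x a ≤ 1 := by linarith [neg_abs_le (x a)]
    have hE : 0 ≤ δ ^ 2 * (2 ^ #s - #s - 1 : ℝ) := by
      have : (#s : ℝ) + 1 ≤ 2 ^ #s := by exact_mod_cast Nat.lt_two_pow_self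
      exact mul_nonneg (sq_nonneg δ) (by linarith)
    have hxE := mul_le_mul_of_nonneg_right hxa1 hE
    rw [prod_cons, sum_cons, card_cons]
    calc (1 - x a) * ∏ b ∈ s, (1 - x b)
        ≤ (1 - x a) * (1 - ∑ b ∈ s, x b + δ ^ 2 * (2 ^ #s - #s - 1)) :=
          mul_le_mul_of_nonneg_left (ih hxs) (by linarith [le_abs_self (x a)])
      _ ≤ _ := by push_cast; rw [pow_succ 2]; linarith

lemma prod_half_sub_le {α : Type*} {s : Finset α} {y : α → ℝ} {ε : ℝ} (hε : ε ≤ 1 / 2)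
    (hy : ∀ a ∈ s, |y a| ≤ ε) :
    ∏ a ∈ s, (1 / 2 - y a) ≤
      (1 - 2 * ∑ a ∈ s, y a + 4 * ε ^ 2 * (2 ^ #s - #s - 1)) / 2 ^ #s := by
  have h := prod_one_sub_le (x := fun a => 2 * y a) (δ := 2 * ε) (by linarith) fun a ha => by
    rw [abs_mul, abs_two]; linarith [hy a ha]
  calc ∏ a ∈ s, (1 / 2 - y a) = (∏ a ∈ s, (1 - 2 * y a)) / 2 ^ #s := by
        rw [← prod_const, ← prod_div_distrib]
        exact prod_congr rfl fun a _ => by ring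
    _ ≤ _ := by
        rw [← mul_sum] at h
        gcongr
        linarith

lemma four_mul_div_two_pow_eq (j : ℕ) :
    4 * ((2 : ℝ) ^ j - j - 1) / 2 ^ j = (2 ^ j - j - 1) / 2 ^ (j - 2) := by
  rcases j with _ | _ | j
  · norm_num
  · norm_num
  · rw [show j + 1 + 1 - 2 = j by omega, pow_succ, pow_succ]
    field_simp
    ring

lemma List.sum_map_finset_sum {α β M : Type*} [AddCommMonoid M] (l : List α) (s : Finset β)
    (f : α → β → M) :
    (l.map fun a => ∑ b ∈ s, f a b).sum = ∑ b ∈ s, (l.map fun a => f a b).sum := by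
  simpa using Multiset.sum_map_sum (m := (l : Multiset α)) (s := s) (f := f)

namespace KClause

variable {n k : ℕ} (C : KClause n k)

lemma eval_eq_true_iff {σ : Fin n → Bool} : C.eval σ = true ↔ ∃ i, (i, σ i) ∈ C.lits := by
  simp only [eval, List.any_eq_true, beq_iff_eq]
  constructor
  · rintro ⟨⟨i, b⟩, h, hb⟩
    exact ⟨i, hb ▸ h⟩
  · rintro ⟨i, h⟩
    exact ⟨_, h, rfl⟩

lemma not_mem_false_of_mem_true {i : Fin n} (h : (i, true) ∈ C.lits) : (i, false) ∉ C.lits :=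
  fun h' => Bool.false_ne_true (congrArg Prod.snd (List.inj_on_of_nodup_map C.nodup h' h rfl))

lemma card_toFinset_lits : #C.lits.toFinset = C.lits.length :=
  List.toFinset_card_of_nodup (C.nodup.of_map _)

lemma sum_biasedWeight_mul_eval (δ : Fin n → ℝ) :
    ∑ σ, biasedWeight δ σ * (if C.eval σ then 1 else 0)
      = 1 - ∏ l ∈ C.lits.toFinset, (1 / 2 - boolSign l.2 * δ l.1) := by
  have hind : ∀ σ, (if C.eval σ then 1 else 0 : ℝ)
      = 1 - if ∀ i, (i, σ i) ∉ C.lits.toFinset then 1 else 0 := by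
    intro σ
    by_cases h : ∃ i, (i, σ i) ∈ C.lits
    · rw [if_pos (C.eval_eq_true_iff.mpr h), if_neg (by simpa using h), sub_zero]
    · rw [if_neg (mt C.eval_eq_true_iff.mp h), if_pos (by simpa using h), sub_self]
  simp only [hind, mul_sub, mul_one, sum_sub_distrib, sum_biasedWeight]
  have hS : ∀ i, (i, true) ∈ C.lits.toFinset → (i, false) ∉ C.lits.toFinset := by
    simpa using fun i => C.not_mem_false_of_mem_true
  congr 1
  -- `convert` reconciles `Nat.decidableForallFin` with `Fintype.decidableForallFintype`
  convert sum_biasedWeight_mul_boole_forall_not_mem δ _ hS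

lemma le_sum_biasedWeight_mul_eval {δ : Fin n → ℝ} {ε : ℝ} (hε : ε ≤ 1 / 2)
    (hδ : ∀ i, |δ i| ≤ ε) :
    1 - 1 / 2 ^ C.lits.length
        - ε ^ 2 * ((2 ^ C.lits.length - C.lits.length - 1) / 2 ^ (C.lits.length - 2))
        + 2 / 2 ^ C.lits.length * ∑ l ∈ C.lits.toFinset, boolSign l.2 * δ l.1
      ≤ ∑ σ, biasedWeight δ σ * (if C.eval σ then 1 else 0) := by
  have h := prod_half_sub_le hε (s := C.lits.toFinset) (y := fun l => boolSign l.2 * δ l.1)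
    fun l _ => by rw [abs_mul, abs_boolSign, one_mul]; exact hδ _
  rw [sum_biasedWeight_mul_eval, ← four_mul_div_two_pow_eq, ← C.card_toFinset_lits]
  linear_combination h

end KClause

section Counting

variable {n k : ℕ} (Ψ : List (KClause n k))

lemma sum_Icc_countP_length_mul (P : KClause n k → Prop) [DecidablePred P] (g : ℕ → ℝ) :
    ∑ r ∈ Icc 1 k, ((Ψ.countP fun C => decide (C.lits.length = r ∧ P C) : ℕ) : ℝ) * g r
      = (Ψ.map fun C => if P C then g C.lits.length else 0).sum := by
  induction Ψ with
  | nil => simp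
  | cons C Ψ ih =>
    have hC : ∑ r ∈ Icc 1 k, (if C.lits.length = r ∧ P C then 1 else 0 : ℝ) * g r
        = if P C then g C.lits.length else 0 := by
      by_cases hP : P C
      · simp only [hP, and_true, if_true, ite_mul, one_mul, zero_mul]
        rw [sum_ite_eq, if_pos (mem_Icc.2 ⟨C.len_pos, C.len_le⟩)]
      · simp [hP]
    simp only [List.countP_cons, List.map_cons, List.sum_cons, ← ih, ← hC, ← sum_add_distrib]
    refine sum_congr rfl fun r _ => ?_
    push_cast [decide_eq_true_eq]
    ring

lemma sum_map_length_eq_sum_numLen (g : ℕ → ℝ) :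
    (Ψ.map fun C => g C.lits.length).sum = ∑ j ∈ Icc 1 k, (numLen Ψ j : ℝ) * g j := by
  have h := (sum_Icc_countP_length_mul Ψ (fun _ => True) g).symm
  simp only [and_true, if_true] at h
  exact h

noncomputable def varBias (v : Fin n) : ℝ :=
  ∑ r ∈ Icc 1 k, ((cntLit Ψ v true r : ℝ) - cntLit Ψ v false r) / 2 ^ (r - 1)

lemma bias_eq_sum_abs_varBias : bias Ψ = ∑ v, |varBias Ψ v| := rfl

lemma varBias_eq_sum_map (v : Fin n) :
    varBias Ψ v = (Ψ.map fun C =>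
      2 / 2 ^ C.lits.length * ∑ b, if (v, b) ∈ C.lits then boolSign b else 0).sum :=
  calc varBias Ψ v
      = ∑ r ∈ Icc 1 k, ∑ b, (cntLit Ψ v b r : ℝ) * (boolSign b * (2 / 2 ^ r)) :=
        sum_congr rfl fun r hr => by
          obtain ⟨r, rfl⟩ := Nat.exists_eq_add_of_le' (mem_Icc.1 hr).1
          rw [Fintype.sum_bool, boolSign_true, boolSign_false, Nat.add_sub_cancel, pow_succ]
          field_simp
          ring
    _ = ∑ b, (Ψ.map fun C => if (v, b) ∈ C.lits then boolSign b * (2 / 2 ^ C.lits.length)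
          else 0).sum := by
        rw [sum_comm]
        simp only [cntLit, sum_Icc_countP_length_mul]
    _ = _ := by
        rw [← List.sum_map_finset_sum]
        refine congrArg List.sum (List.map_congr_left fun C _ => ?_)
        rw [mul_sum]
        exact sum_congr rfl fun b _ => by split_ifs <;> ring

lemma sum_mul_varBias (δ : Fin n → ℝ) :
    ∑ v, δ v * varBias Ψ v = (Ψ.map fun C =>
      2 / 2 ^ C.lits.length * ∑ l ∈ C.lits.toFinset, boolSign l.2 * δ l.1).sum := by
  simp only [varBias_eq_sum_map, ← List.sum_map_mul_left]
  rw [← List.sum_map_finset_sum]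
  refine congrArg List.sum (List.map_congr_left fun C _ => ?_)
  rw [← univ_inter C.lits.toFinset, ← sum_ite_mem, Fintype.sum_prod_type, mul_sum]
  refine sum_congr rfl fun v _ => ?_
  rw [mul_left_comm, mul_sum]
  congr 1
  refine sum_congr rfl fun b _ => ?_
  simp only [List.mem_toFinset]
  split_ifs <;> ring

lemma sum_biasedWeight_mul_satCount (δ : Fin n → ℝ) :
    ∑ σ, biasedWeight δ σ * satCount Ψ σ
      = (Ψ.map fun C => ∑ σ, biasedWeight δ σ * if C.eval σ then 1 else 0).sum := by
  induction Ψ with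
  | nil => simp [satCount]
  | cons C Ψ ih =>
    simp only [satCount, List.countP_cons, List.map_cons, List.sum_cons, ← ih, ← sum_add_distrib]
    refine sum_congr rfl fun σ _ => ?_
    push_cast
    ring

end Counting

lemma le_maxVal_of_abs_le {n k : ℕ} (Ψ : List (KClause n k)) {δ : Fin n → ℝ} {ε : ℝ}
    (hε : ε ≤ 1 / 2) (hδ : ∀ v, |δ v| ≤ ε) :
    ∑ j ∈ Icc 1 k, (1 - 1 / (2 : ℝ) ^ j) * numLen Ψ j + ∑ v, δ v * varBias Ψ v
      - ε ^ 2 * ∑ j ∈ Icc 1 k, ((2 : ℝ) ^ j - j - 1) / 2 ^ (j - 2) * numLen Ψ j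
      ≤ maxVal Ψ :=
  calc _ = (Ψ.map fun C => 1 - 1 / 2 ^ C.lits.length
          - ε ^ 2 * ((2 ^ C.lits.length - C.lits.length - 1) / 2 ^ (C.lits.length - 2))
          + 2 / 2 ^ C.lits.length * ∑ l ∈ C.lits.toFinset, boolSign l.2 * δ l.1).sum := by
        rw [List.sum_map_add, sum_mul_varBias, sum_map_length_eq_sum_numLen Ψ fun j =>
          1 - 1 / 2 ^ j - ε ^ 2 * ((2 ^ j - j - 1) / 2 ^ (j - 2)), mul_sum,
          add_sub_right_comm, ← sum_sub_distrib]
        congr 1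
        exact sum_congr rfl fun j _ => by ring
    _ ≤ (Ψ.map fun C => ∑ σ, biasedWeight δ σ * if C.eval σ then 1 else 0).sum :=
        List.sum_le_sum fun C _ => C.le_sum_biasedWeight_mul_eval hε hδ
    _ = ∑ σ, biasedWeight δ σ * satCount Ψ σ := (sum_biasedWeight_mul_satCount Ψ δ).symm
    _ ≤ maxVal Ψ := sum_biasedWeight_mul_le (fun v => (hδ v).trans hε) fun σ => by
        exact_mod_cast le_sup (f := fun σ => satCount Ψ σ) (mem_univ σ)

lemma le_maxVal_of_nonneg_of_le_half {n k : ℕ} (Ψ : List (KClause n k)) {ε : ℝ} (hε0 : 0 ≤ ε)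
    (hε : ε ≤ 1 / 2) :
    ∑ j ∈ Icc 1 k, (1 - 1 / (2 : ℝ) ^ j) * numLen Ψ j + ε * bias Ψ
      - ε ^ 2 * ∑ j ∈ Icc 1 k, ((2 : ℝ) ^ j - j - 1) / 2 ^ (j - 2) * numLen Ψ j
      ≤ maxVal Ψ := by
  have h := le_maxVal_of_abs_le Ψ hε (δ := fun v => ε * SignType.sign (varBias Ψ v)) fun v => by
    rw [abs_mul, abs_of_nonneg hε0]
    refine mul_le_of_le_one_right hε0 ?_
    cases SignType.sign (varBias Ψ v) <;> simp
  simpa only [mul_assoc, sign_mul_self, ← mul_sum, ← bias_eq_sum_abs_varBias] using h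

theorem ksat_bias_lower_bound_two_general {n k : ℕ} (Ψ : List (KClause n k))
    (D : ℝ)
    (hD : D = ∑ j ∈ Finset.Icc 2 k,
      (((2 : ℝ) ^ j - (j : ℝ) - 1) / 2 ^ (j - 2)) * (numLen Ψ j : ℝ))
    (hDpos : 0 < D) (hb : bias Ψ ≤ D) :
    ∑ j ∈ Finset.Icc 1 k, (1 - 1 / (2 : ℝ) ^ j) * (numLen Ψ j : ℝ)
        + (bias Ψ) ^ 2 / (4 * D) ≤ (maxVal Ψ : ℝ) := by
  have hD' : ∑ j ∈ Icc 1 k, ((2 : ℝ) ^ j - j - 1) / 2 ^ (j - 2) * numLen Ψ j = D := by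
    rw [hD]
    refine (sum_subset (Icc_subset_Icc_left one_le_two) fun j hj hj' => ?_).symm
    obtain rfl : j = 1 := by simp only [mem_Icc] at hj hj'; omega
    norm_num
  have hbias : 0 ≤ bias Ψ := sum_nonneg fun v _ => abs_nonneg _
  have h := le_maxVal_of_nonneg_of_le_half Ψ (ε := bias Ψ / (2 * D)) (by positivity) (by
    rw [div_le_iff₀ (by positivity)]
    linarith)
  have hgain : bias Ψ / (2 * D) * bias Ψ - (bias Ψ / (2 * D)) ^ 2 * D = bias Ψ ^ 2 / (4 * D) := by
    field_simp
    ring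
  rw [hD'] at h
  linarith

/-- Lemma 6.2, part 2: with `D = Σ_{j=2}^k ((2^j − j − 1)/2^{j−2})·m_j`, if `D > 0`
and `bias(Ψ) ≤ D` then `val_Ψ ≥ Σ_{j=1}^k (1 − 2^{−j})·m_j + bias(Ψ)²/(4D)`. -/
theorem ksat_bias_lower_bound_two {n k : ℕ} (hk : 2 ≤ k) (Ψ : List (KClause n k))
    (D : ℝ)
    (hD : D = ∑ j ∈ Finset.Icc 2 k,
      (((2 : ℝ) ^ j - (j : ℝ) - 1) / 2 ^ (j - 2)) * (numLen Ψ j : ℝ))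
    (hDpos : 0 < D) (hb : bias Ψ ≤ D) :
    ∑ j ∈ Finset.Icc 1 k, (1 - 1 / (2 : ℝ) ^ j) * (numLen Ψ j : ℝ)
        + (bias Ψ) ^ 2 / (4 * D) ≤ (maxVal Ψ : ℝ) :=
  ksat_bias_lower_bound_two_general Ψ D hD hDpos hb
end

section
/- Let ε ∈ (0, 0.01) and δ = ε/8. Let Ψ be a Max-kSAT instance with m_j j-clauses for j = 1,…,k, set D = Σ_{j=2}^k ((2^j − j − 1)/2^{j−2})·m_j, and let B be a real number with (1−δ)·bias(Ψ) ≤ B ≤ (1+δ)·bias(Ψ). Define v = Σ_{j=1}^k (1 − 2^{−j})·m_j + (1−δ)²·B²/(4D) if B ≤ (1−δ)·D (with B²/D interpreted as 0 when D = 0), and v = Σ_{j=1}^k (j/2^j)·m_j + (1−δ)·B/2 otherwise. Then v ≤ val_Ψ and v ≥ (√2/2 − ε)·val_Ψ. (Correctness analysis of Algorithm 4 in Theorem 1.2, the (√2/2 − ε)-approximation for Max-kSAT.) -/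
namespace MaxKSatAux
variable {n k : ℕ}

noncomputable def wgt (Ψ : List (KClause n k)) (i : Fin n) : ℝ :=
  ∑ r ∈ Finset.Icc 1 k, ((cntLit Ψ i true r : ℝ) - (cntLit Ψ i false r : ℝ)) / 2 ^ (r - 1)

lemma bias_eq (Ψ : List (KClause n k)) : bias Ψ = ∑ i, |wgt Ψ i| := rfl

lemma collapse {L : ℕ} (hmem : L ∈ Finset.Icc 1 k) (c : ℕ → ℝ) (P : Prop) [Decidable P] :
    ∑ r ∈ Finset.Icc 1 k, c r * (if (L = r ∧ P) then (1:ℝ) else 0) = if P then c L else 0 := by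
  have h : ∀ r ∈ Finset.Icc 1 k,
      c r * (if (L = r ∧ P) then (1:ℝ) else 0) = if r = L then (if P then c r else 0) else 0 := by
    intro r _
    by_cases hr : L = r
    · subst hr; by_cases hP : P <;> simp [hP]
    · rw [if_neg (show ¬(L = r ∧ P) from fun h => hr h.1),
        if_neg (show ¬(r = L) from fun h => hr h.symm)]
      ring
  rw [Finset.sum_congr rfl h,
    Finset.sum_ite_eq' (Finset.Icc 1 k) L (fun r => if P then c r else 0), if_pos hmem]

/-- Aggregation over clause lengths. -/
lemma sum_glen (Ψ : List (KClause n k)) (g : ℕ → ℝ) :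
    (Ψ.map (fun C => g C.lits.length)).sum = ∑ j ∈ Finset.Icc 1 k, g j * (numLen Ψ j : ℝ) := by
  induction Ψ with
  | nil => simp [numLen]
  | cons C Ψ ih =>
    have hmem : C.lits.length ∈ Finset.Icc 1 k := Finset.mem_Icc.2 ⟨C.len_pos, C.len_le⟩
    have hcnt : ∀ j, ((numLen (C::Ψ) j : ℝ))
        = (numLen Ψ j : ℝ) + if C.lits.length = j then 1 else 0 := by
      intro j
      simp only [numLen, List.countP_cons, beq_iff_eq]
      split <;> simp
    simp only [List.map_cons, List.sum_cons, ih, hcnt, mul_add]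
    rw [Finset.sum_add_distrib]
    have h2 : ∑ j ∈ Finset.Icc 1 k, g j * (if C.lits.length = j then (1:ℝ) else 0)
        = g C.lits.length := by
      have := collapse (k := k) hmem g True
      simpa using this
    rw [h2]; ring

lemma list_sum_eq_sum_univ (L : List (Fin n × Bool)) (hL : L.Nodup) (f : Fin n × Bool → ℝ) :
    (L.map f).sum = ∑ x : Fin n × Bool, if x ∈ L then f x else 0 := by
  rw [← List.sum_toFinset f hL]
  have h : L.toFinset = Finset.univ.filter (· ∈ L) := by ext x; simp
  rw [h, Finset.sum_filter]

/-- The key double-counting swap. -/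
lemma swap_sum (Ψ : List (KClause n k)) (F : Fin n → Bool → ℕ → ℝ) :
    ∑ i, ∑ r ∈ Finset.Icc 1 k,
      (F i true r * (cntLit Ψ i true r : ℝ) + F i false r * (cntLit Ψ i false r : ℝ))
      = (Ψ.map (fun C => (C.lits.map (fun l => F l.1 l.2 C.lits.length)).sum)).sum := by
  induction Ψ with
  | nil => simp [cntLit]
  | cons C Ψ ih =>
    have hmem : C.lits.length ∈ Finset.Icc 1 k := Finset.mem_Icc.2 ⟨C.len_pos, C.len_le⟩
    have hcnt : ∀ i b r, ((cntLit (C::Ψ) i b r : ℝ))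
        = (cntLit Ψ i b r : ℝ) + if C.lits.length = r ∧ (i,b) ∈ C.lits then 1 else 0 := by
      intro i b r
      simp only [cntLit, List.countP_cons, decide_eq_true_eq]
      split <;> simp
    simp only [List.map_cons, List.sum_cons, hcnt, mul_add]
    have split : ∑ i, ∑ r ∈ Finset.Icc 1 k,
        ((F i true r * (cntLit Ψ i true r : ℝ)
          + F i true r * (if C.lits.length = r ∧ (i,true) ∈ C.lits then (1:ℝ) else 0))
         + (F i false r * (cntLit Ψ i false r : ℝ)
          + F i false r * (if C.lits.length = r ∧ (i,false) ∈ C.lits then (1:ℝ) else 0)))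
        = (∑ i, ∑ r ∈ Finset.Icc 1 k,
            (F i true r * (cntLit Ψ i true r : ℝ) + F i false r * (cntLit Ψ i false r : ℝ)))
        + ∑ i, (∑ r ∈ Finset.Icc 1 k,
            F i true r * (if C.lits.length = r ∧ (i,true) ∈ C.lits then (1:ℝ) else 0)
          + ∑ r ∈ Finset.Icc 1 k,
            F i false r * (if C.lits.length = r ∧ (i,false) ∈ C.lits then (1:ℝ) else 0)) := by
      rw [← Finset.sum_add_distrib]
      apply Finset.sum_congr rfl; intro i _
      rw [← Finset.sum_add_distrib, ← Finset.sum_add_distrib]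
      apply Finset.sum_congr rfl; intro r _; ring
    rw [split, ih]
    have hnodup : C.lits.Nodup := C.nodup.of_map
    have hE : ∑ i, (∑ r ∈ Finset.Icc 1 k,
            F i true r * (if C.lits.length = r ∧ (i,true) ∈ C.lits then (1:ℝ) else 0)
          + ∑ r ∈ Finset.Icc 1 k,
            F i false r * (if C.lits.length = r ∧ (i,false) ∈ C.lits then (1:ℝ) else 0))
        = (C.lits.map (fun l => F l.1 l.2 C.lits.length)).sum := by
      rw [list_sum_eq_sum_univ C.lits hnodup, Fintype.sum_prod_type]
      apply Finset.sum_congr rfl; intro i _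
      rw [collapse hmem (fun r => F i true r) _, collapse hmem (fun r => F i false r) _]
      rw [Fintype.sum_bool]
    rw [hE]; ring

lemma sum_prod_pi (t : Fin n → Bool → ℝ) :
    ∑ σ : Fin n → Bool, ∏ i, t i (σ i) = ∏ i, (t i false + t i true) := by
  have h := Finset.prod_univ_sum (fun _ : Fin n => (Finset.univ : Finset Bool)) (fun i b => t i b)
  rw [Fintype.piFinset_univ] at h
  rw [← h]
  apply Finset.prod_congr rfl; intro i _
  rw [Fintype.sum_bool]; ring

lemma clause_exp (p : Fin n → Bool → ℝ) (hp1 : ∀ i, p i false + p i true = 1)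
    (C : KClause n k) :
    ∑ σ : Fin n → Bool, (∏ i, p i (σ i)) * (if C.eval σ then (1:ℝ) else 0)
      = 1 - (C.lits.map (fun l => p l.1 (!l.2))).prod := by
  classical
  set P : Fin n → Bool → ℝ := fun i b => p i b * (if (i,b) ∈ C.lits then 0 else 1) with hP
  have step_a : ∀ σ : Fin n → Bool,
      (∏ i, P i (σ i)) = (if C.eval σ then 0 else 1) * ∏ i, p i (σ i) := by
    intro σ
    by_cases h : C.eval σ
    · rw [if_pos h]
      obtain ⟨l, hl, hsat⟩ := List.any_eq_true.mp h
      have hmem : (l.1, σ l.1) ∈ C.lits := by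
        have hs : σ l.1 = l.2 := by simpa using hsat
        rw [hs]
        exact (by cases l; exact hl)
      rw [Finset.prod_eq_zero (Finset.mem_univ l.1) (by simp [P, hmem])]
      ring
    · rw [if_neg h, one_mul]
      apply Finset.prod_congr rfl; intro i _
      have hni : (i, σ i) ∉ C.lits := by
        intro hmem
        exact h (List.any_eq_true.mpr ⟨(i, σ i), hmem, by simp⟩)
      simp [P, hni]
  have hb : ∑ σ : Fin n → Bool, ∏ i, P i (σ i) = ∏ i, (P i false + P i true) :=
    sum_prod_pi _
  have huniq : ∀ l ∈ C.lits, ∀ l' ∈ C.lits, l.1 = l'.1 → l = l' :=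
    List.inj_on_of_nodup_map C.nodup
  have hc : ∏ i, (P i false + P i true) = (C.lits.map (fun l => p l.1 (!l.2))).prod := by
    have h1 : ∏ i, (P i false + P i true)
        = ∏ i ∈ (C.lits.map Prod.fst).toFinset, (P i false + P i true) := by
      refine (Finset.prod_subset (Finset.subset_univ _) ?_).symm
      intro i _ hiS
      have hb' : ∀ b, (i, b) ∉ C.lits := by
        intro b hmem
        exact hiS (List.mem_toFinset.mpr (List.mem_map.mpr ⟨(i,b), hmem, rfl⟩))
      simp [P, hb' true, hb' false, hp1 i]
    rw [h1, List.prod_toFinset _ C.nodup, List.map_map]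
    congr 1
    apply List.map_congr_left
    intro l hl
    have hother : (l.1, !l.2) ∉ C.lits := by
      intro hmem
      have := huniq l hl (l.1, !l.2) hmem rfl
      have h2 : l.2 = !l.2 := by
        conv_lhs => rw [this]
      simp at h2
    have hself : (l.1, l.2) ∈ C.lits := by cases l; exact hl
    cases hb2 : l.2 with
    | true => simp only [Function.comp_apply, P]
              rw [hb2] at hother hself
              simp only [Bool.not_true] at hother ⊢
              simp [hself, hother]
    | false => simp only [Function.comp_apply, P]
               rw [hb2] at hother hself
               simp only [Bool.not_false] at hother ⊢
               simp [hself, hother]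
  have htot : ∑ σ : Fin n → Bool, ∏ i, p i (σ i) = 1 := by
    rw [sum_prod_pi]
    rw [Finset.prod_congr rfl (fun i _ => hp1 i)]
    simp
  have key : ∀ σ : Fin n → Bool,
      (∏ i, p i (σ i)) * (if C.eval σ then (1:ℝ) else 0)
      = (∏ i, p i (σ i)) - ∏ i, P i (σ i) := by
    intro σ
    rw [step_a σ]
    by_cases h : C.eval σ <;> simp [h]
  rw [Finset.sum_congr rfl (fun σ _ => key σ), Finset.sum_sub_distrib, htot, hb, hc]

lemma exp_satCount (p : Fin n → Bool → ℝ) (hp1 : ∀ i, p i false + p i true = 1)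
    (Ψ : List (KClause n k)) :
    ∑ σ : Fin n → Bool, (∏ i, p i (σ i)) * (satCount Ψ σ : ℝ)
      = (Ψ.map (fun C => 1 - (C.lits.map (fun l => p l.1 (!l.2))).prod)).sum := by
  induction Ψ with
  | nil => simp [satCount]
  | cons C Ψ ih =>
    have hsat : ∀ σ, ((satCount (C::Ψ) σ : ℝ))
        = (satCount Ψ σ : ℝ) + if C.eval σ then 1 else 0 := by
      intro σ; simp only [satCount, List.countP_cons]; split <;> simp
    simp only [hsat, mul_add, List.map_cons, List.sum_cons]
    rw [Finset.sum_add_distrib, ih, clause_exp p hp1 C]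
    ring

lemma abs_list_sum_le (L : List ℝ) (u : ℝ) (h : ∀ a ∈ L, |a| ≤ u) :
    |L.sum| ≤ L.length * u := by
  induction L with
  | nil => simp
  | cons a L ih =>
    simp only [List.sum_cons, List.length_cons]
    calc |a + L.sum| ≤ |a| + |L.sum| := abs_add_le _ _
    _ ≤ u + L.length * u :=
      add_le_add (h a (by simp)) (ih (fun x hx => h x (by simp [hx])))
    _ = (((L.length + 1 : ℕ)) : ℝ) * u := by push_cast; ring

lemma prod_one_sub_le (L : List ℝ) (u : ℝ) (hu1 : u ≤ 1)
    (h : ∀ a ∈ L, |a| ≤ u) :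
    (L.map (fun a => 1 - a)).prod
      ≤ 1 - L.sum + ((2:ℝ)^L.length - L.length - 1) * u^2 := by
  induction L with
  | nil => simp
  | cons a L ih =>
    have ha := h a (by simp)
    have hu0 : 0 ≤ u := le_trans (abs_nonneg a) ha
    have hP0 : 0 ≤ (L.map (fun a => 1 - a)).prod := by
      apply List.prod_nonneg
      intro x hx
      obtain ⟨y, hy, rfl⟩ := List.mem_map.mp hx
      have := h y (by simp [hy])
      have := abs_le.mp this
      linarith
    have hIH := ih (fun x hx => h x (by simp [hx]))
    have hS : |L.sum| ≤ L.length * u := abs_list_sum_le L u (fun x hx => h x (by simp [hx]))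
    have hE : ((L.length:ℝ) + 1) ≤ 2 ^ L.length := by
      have := Nat.lt_two_pow_self (n := L.length)
      exact_mod_cast this
    have haa := abs_le.mp ha
    have hSS := abs_le.mp hS
    have h1a : 0 ≤ 1 - a := by linarith
    simp only [List.map_cons, List.prod_cons, List.sum_cons, List.length_cons]
    have step1 : (1 - a) * (L.map (fun a => 1 - a)).prod
        ≤ (1 - a) * (1 - L.sum + ((2:ℝ)^L.length - L.length - 1) * u^2) :=
      mul_le_mul_of_nonneg_left hIH h1a
    have haS : a * L.sum ≤ L.length * u^2 := by
      calc a * L.sum ≤ |a * L.sum| := le_abs_self _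
      _ = |a| * |L.sum| := abs_mul _ _
      _ ≤ u * (L.length * u) := by
          apply mul_le_mul ha hS (abs_nonneg _) hu0
      _ = L.length * u^2 := by ring
    have hpow : (2:ℝ)^(L.length + 1) = 2 * 2^L.length := by ring
    have hEpos : (0:ℝ) ≤ (2:ℝ)^L.length - L.length - 1 := by linarith
    push_cast
    nlinarith [mul_nonneg (mul_nonneg hEpos (sq_nonneg u)) (sub_nonneg.mpr hu1),
      mul_nonneg hEpos (sq_nonneg u), sq_nonneg u,
      mul_le_mul_of_nonneg_left hu1 (mul_nonneg hEpos (mul_nonneg hu0 hu0))]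

noncomputable def sgn (Ψ : List (KClause n k)) (i : Fin n) : ℝ := if 0 ≤ wgt Ψ i then 1 else -1

lemma abs_sgn (Ψ : List (KClause n k)) (i : Fin n) : |sgn Ψ i| = 1 := by
  unfold sgn; split <;> simp

lemma sgn_mul_wgt (Ψ : List (KClause n k)) (i : Fin n) : sgn Ψ i * wgt Ψ i = |wgt Ψ i| := by
  unfold sgn
  split
  · rw [one_mul, abs_of_nonneg (by assumption)]
  · rw [abs_of_neg (by linarith [lt_of_not_ge (by assumption)])]; ring

lemma list_sum_le {α : Type*} (Ψ : List α) (f g : α → ℝ) (h : ∀ C ∈ Ψ, f C ≤ g C) :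
    (Ψ.map f).sum ≤ (Ψ.map g).sum := by
  induction Ψ with
  | nil => simp
  | cons C Ψ ih =>
    simp only [List.map_cons, List.sum_cons]
    exact add_le_add (h C (by simp)) (ih (fun x hx => h x (by simp [hx])))

lemma list_sum_linear {α : Type*} (Ψ : List α) (f g h : α → ℝ) (a b : ℝ) :
    (Ψ.map (fun C => f C + a * g C + b * h C)).sum
      = (Ψ.map f).sum + a * (Ψ.map g).sum + b * (Ψ.map h).sum := by
  induction Ψ with
  | nil => simp
  | cons C Ψ ih => simp only [List.map_cons, List.sum_cons, ih]; ring

lemma sum_map_mul_left' {α : Type*} (L : List α) (c : ℝ) (f : α → ℝ) :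
    (L.map (fun x => c * f x)).sum = c * (L.map f).sum := by
  induction L with
  | nil => simp
  | cons a L ih => simp only [List.map_cons, List.sum_cons, ih]; ring

lemma prod_map_smul (c : ℝ) (L : List ℝ) :
    (L.map (fun a => c * (1 - a))).prod = c ^ L.length * (L.map (fun a => 1 - a)).prod := by
  induction L with
  | nil => simp
  | cons a L ih => simp only [List.map_cons, List.prod_cons, List.length_cons, ih, pow_succ]; ring

/-- The central lower bound: for any `η ∈ [0, 1/2]`,
`maxVal ≥ A + η·bias − η²·4(A−C)`. -/
lemma lower_bound (Ψ : List (KClause n k)) (η : ℝ) (hη0 : 0 ≤ η) (hη1 : η ≤ 1/2) :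
    (∑ j ∈ Finset.Icc 1 k, (1 - 1/(2:ℝ)^j) * (numLen Ψ j : ℝ)) + η * bias Ψ
      - η^2 * (4 * ((∑ j ∈ Finset.Icc 1 k, (1 - 1/(2:ℝ)^j) * (numLen Ψ j : ℝ))
                 - (∑ j ∈ Finset.Icc 1 k, ((j:ℝ)/2^j) * (numLen Ψ j : ℝ))))
      ≤ (maxVal Ψ : ℝ) := by
  classical
  set p : Fin n → Bool → ℝ := fun i b => 1/2 + η * sgn Ψ i * (if b then 1 else -1) with hp
  have habs : ∀ (i : Fin n) (b : Bool), |sgn Ψ i * (if b then (1:ℝ) else -1)| = 1 := by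
    intro i b
    rw [abs_mul, abs_sgn]
    cases b <;> simp
  have hp1 : ∀ i, p i false + p i true = 1 := by
    intro i; simp only [hp, Bool.false_eq_true, if_true, if_false]; ring
  have hp0 : ∀ i b, 0 ≤ p i b := by
    intro i b
    obtain ⟨h2, h1⟩ := abs_le.mp (le_of_eq (habs i b))
    simp only [hp]
    nlinarith
  have hw0 : ∀ σ : Fin n → Bool, 0 ≤ ∏ i, p i (σ i) := by
    intro σ; exact Finset.prod_nonneg (fun i _ => hp0 i (σ i))
  have htot : ∑ σ : Fin n → Bool, ∏ i, p i (σ i) = 1 := by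
    rw [sum_prod_pi, Finset.prod_congr rfl (fun i _ => hp1 i)]; simp
  -- the expectation is at most maxVal
  have hEle : ∑ σ : Fin n → Bool, (∏ i, p i (σ i)) * (satCount Ψ σ : ℝ) ≤ (maxVal Ψ : ℝ) := by
    have hsat_le : ∀ σ : Fin n → Bool, (satCount Ψ σ : ℝ) ≤ (maxVal Ψ : ℝ) :=
      fun σ => Nat.cast_le.mpr (Finset.le_sup (Finset.mem_univ σ))
    calc ∑ σ : Fin n → Bool, (∏ i, p i (σ i)) * (satCount Ψ σ : ℝ)
        ≤ ∑ σ : Fin n → Bool, (∏ i, p i (σ i)) * (maxVal Ψ : ℝ) :=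
          Finset.sum_le_sum (fun σ _ => mul_le_mul_of_nonneg_left (hsat_le σ) (hw0 σ))
      _ = (maxVal Ψ : ℝ) := by rw [← Finset.sum_mul, htot, one_mul]
  -- per-clause lower bound on the expectation
  have hclause : ∀ C ∈ Ψ,
      (1 - 1/(2:ℝ)^C.lits.length)
        + (2*η) * ((C.lits.map (fun l =>
            (1/(2:ℝ)^C.lits.length) * (sgn Ψ l.1 * (if l.2 then 1 else -1)))).sum)
        + (-4*η^2) * (((2:ℝ)^C.lits.length - C.lits.length - 1)/2^C.lits.length)
      ≤ 1 - (C.lits.map (fun l => p l.1 (!l.2))).prod := by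
    intro C _
    set T : List ℝ := C.lits.map (fun l => 2*η*(sgn Ψ l.1 * (if l.2 then 1 else -1))) with hT
    have hmapeq : C.lits.map (fun l => p l.1 (!l.2))
        = T.map (fun a => (1/2) * (1 - a)) := by
      rw [hT, List.map_map]
      apply List.map_congr_left
      intro l _
      cases hb : l.2 <;>
        simp only [hp, Function.comp_apply, hb, Bool.not_false, Bool.not_true,
          Bool.false_eq_true, if_true, if_false] <;> ring
    have hTlen : T.length = C.lits.length := by rw [hT, List.length_map]
    have hTbound : ∀ a ∈ T, |a| ≤ 2*η := by
      intro a ha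
      rw [hT] at ha
      obtain ⟨l, _, rfl⟩ := List.mem_map.mp ha
      rw [abs_mul, habs l.1 l.2, mul_one, abs_of_nonneg (by linarith)]
    have hu1 : 2*η ≤ 1 := by linarith
    have hple := prod_one_sub_le T (2*η) hu1 hTbound
    have hprod : (C.lits.map (fun l => p l.1 (!l.2))).prod
        = (1/2)^C.lits.length * (T.map (fun a => 1 - a)).prod := by
      rw [hmapeq, prod_map_smul, hTlen]
    have hTsum : T.sum = 2*η * ((C.lits.map (fun l => sgn Ψ l.1 * (if l.2 then 1 else -1))).sum) := by
      rw [hT, ← sum_map_mul_left']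
    have hinner : (C.lits.map (fun l =>
            (1/(2:ℝ)^C.lits.length) * (sgn Ψ l.1 * (if l.2 then 1 else -1)))).sum
        = (1/(2:ℝ)^C.lits.length) * ((C.lits.map (fun l => sgn Ψ l.1 * (if l.2 then 1 else -1))).sum) :=
      sum_map_mul_left' _ _ _
    have hpow : ((1:ℝ)/2)^C.lits.length = 1/(2:ℝ)^C.lits.length := by
      rw [one_div_pow]
    have hpowpos : (0:ℝ) < (2:ℝ)^C.lits.length := by positivity
    rw [hprod, hinner, hpow]
    rw [hTlen] at hple
    have := mul_le_mul_of_nonneg_left hple (le_of_lt (by positivity : (0:ℝ) < 1/(2:ℝ)^C.lits.length))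
    rw [hTsum] at this
    -- this : (1/2^len) * prod(1-a) ≤ (1/2^len) * (1 - 2η*S + (2^len - len - 1)(2η)²)
    have hexp : (1/(2:ℝ)^C.lits.length) * (1 - 2*η*((C.lits.map (fun l => sgn Ψ l.1 * (if l.2 then 1 else -1))).sum) + ((2:ℝ)^C.lits.length - C.lits.length - 1) * (2*η)^2)
        = 1/(2:ℝ)^C.lits.length - (2*η) * ((1/(2:ℝ)^C.lits.length) * ((C.lits.map (fun l => sgn Ψ l.1 * (if l.2 then 1 else -1))).sum)) + (4*η^2) * (((2:ℝ)^C.lits.length - C.lits.length - 1)/2^C.lits.length) := by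
      field_simp
      ring
    rw [hexp] at this
    linarith
  -- aggregate
  have hagg := list_sum_le Ψ _ _ hclause
  rw [exp_satCount p hp1 Ψ] at hEle
  have hlin := list_sum_linear Ψ
    (fun C => 1 - 1/(2:ℝ)^C.lits.length)
    (fun C => (C.lits.map (fun l =>
        (1/(2:ℝ)^C.lits.length) * (sgn Ψ l.1 * (if l.2 then 1 else -1)))).sum)
    (fun C => ((2:ℝ)^C.lits.length - C.lits.length - 1)/2^C.lits.length)
    (2*η) (-4*η^2)
  rw [hlin] at hagg
  have hS1 : (Ψ.map (fun C => 1 - 1/(2:ℝ)^C.lits.length)).sum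
      = ∑ j ∈ Finset.Icc 1 k, (1 - 1/(2:ℝ)^j) * (numLen Ψ j : ℝ) :=
    sum_glen Ψ (fun j => 1 - 1/(2:ℝ)^j)
  have hS3 : (Ψ.map (fun C => ((2:ℝ)^C.lits.length - C.lits.length - 1)/2^C.lits.length)).sum
      = ∑ j ∈ Finset.Icc 1 k, (((2:ℝ)^j - j - 1)/2^j) * (numLen Ψ j : ℝ) :=
    sum_glen Ψ (fun j => ((2:ℝ)^j - j - 1)/2^j)
  have hS2 : (Ψ.map (fun C => (C.lits.map (fun l =>
        (1/(2:ℝ)^C.lits.length) * (sgn Ψ l.1 * (if l.2 then 1 else -1)))).sum)).sum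
      = bias Ψ / 2 := by
    rw [← swap_sum Ψ (fun i b r => (1/(2:ℝ)^r) * (sgn Ψ i * (if b then 1 else -1))), bias_eq,
      Finset.sum_div]
    apply Finset.sum_congr rfl
    intro i _
    have hterm : ∀ r ∈ Finset.Icc 1 k,
        (1/(2:ℝ)^r * (sgn Ψ i * if true = true then (1:ℝ) else -1) * (cntLit Ψ i true r : ℝ) +
          1/(2:ℝ)^r * (sgn Ψ i * if false = true then (1:ℝ) else -1) * (cntLit Ψ i false r : ℝ))
        = sgn Ψ i * ((((cntLit Ψ i true r : ℝ) - (cntLit Ψ i false r : ℝ)) / 2 ^ (r - 1)) / 2) := by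
      intro r hr
      have hr1 : 1 ≤ r := (Finset.mem_Icc.mp hr).1
      have hpow2 : (2:ℝ)^r = (2:ℝ)^(r-1) * 2 := by
        have h : r - 1 + 1 = r := by omega
        rw [← pow_succ, h]
      have hpos : (0:ℝ) < 2^(r-1) := by positivity
      simp only [if_true, Bool.false_eq_true, if_false]
      rw [hpow2]
      field_simp
      ring
    rw [Finset.sum_congr rfl hterm, ← Finset.mul_sum, ← Finset.sum_div]
    have hwgt : wgt Ψ i = ∑ r ∈ Finset.Icc 1 k,
        ((cntLit Ψ i true r : ℝ) - (cntLit Ψ i false r : ℝ)) / 2 ^ (r - 1) := rfl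
    rw [← hwgt, ← mul_div_assoc, sgn_mul_wgt]
  have hsplit : ∑ j ∈ Finset.Icc 1 k, (((2:ℝ)^j - j - 1)/2^j) * (numLen Ψ j : ℝ)
      = (∑ j ∈ Finset.Icc 1 k, (1 - 1/(2:ℝ)^j) * (numLen Ψ j : ℝ))
        - ∑ j ∈ Finset.Icc 1 k, ((j:ℝ)/2^j) * (numLen Ψ j : ℝ) := by
    rw [← Finset.sum_sub_distrib]
    apply Finset.sum_congr rfl
    intro j _
    have hpos : (0:ℝ) < 2^j := by positivity
    field_simp
    ring
  rw [hS1, hS2, hS3, hsplit] at hagg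
  have h2 : 2*η*(bias Ψ/2) = η * bias Ψ := by ring
  rw [h2] at hagg
  linarith [hagg, hEle]


lemma list_sum_const {α : Type*} (L : List α) (c : ℝ) :
    (L.map (fun _ => c)).sum = L.length * c := by
  induction L with
  | nil => simp
  | cons a L ih => simp only [List.map_cons, List.sum_cons, List.length_cons, ih]; push_cast; ring

lemma satCount_eq (Ψ : List (KClause n k)) (σ : Fin n → Bool) :
    (satCount Ψ σ : ℝ) = (Ψ.map (fun C => if C.eval σ then (1:ℝ) else 0)).sum := by
  induction Ψ with
  | nil => simp [satCount]
  | cons C Ψ ih =>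
    simp only [satCount, List.countP_cons, List.map_cons, List.sum_cons] at *
    push_cast
    rw [← ih]
    split <;> push_cast <;> ring

lemma length_eq (Ψ : List (KClause n k)) :
    (Ψ.length : ℝ) = ∑ j ∈ Finset.Icc 1 k, (numLen Ψ j : ℝ) := by
  have h := sum_glen Ψ (fun _ => (1:ℝ))
  rw [list_sum_const] at h
  simpa using h

/-- Trivial upper bound `maxVal ≤ m`. -/
lemma maxVal_le_M (Ψ : List (KClause n k)) :
    (maxVal Ψ : ℝ) ≤ ∑ j ∈ Finset.Icc 1 k, (numLen Ψ j : ℝ) := by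
  rw [← length_eq]
  have h : maxVal Ψ ≤ Ψ.length :=
    Finset.sup_le (fun σ _ => List.countP_le_length)
  exact_mod_cast h

/-- The counting identity `Σᵢ Σᵣ 2⁻ʳ(posᵢ+negᵢ) = Σⱼ (j/2ʲ)·mⱼ`. -/
lemma Qsum (Ψ : List (KClause n k)) :
    ∑ i, ∑ r ∈ Finset.Icc 1 k,
      (1/(2:ℝ)^r) * ((cntLit Ψ i true r : ℝ) + (cntLit Ψ i false r : ℝ))
      = ∑ j ∈ Finset.Icc 1 k, ((j:ℝ)/2^j) * (numLen Ψ j : ℝ) := by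
  have h := swap_sum Ψ (fun _ _ r => 1/(2:ℝ)^r)
  have h2 : ∀ C : KClause n k,
      ((C.lits.map (fun _ => 1/(2:ℝ)^C.lits.length)).sum)
      = (C.lits.length : ℝ)/2^C.lits.length := by
    intro C; rw [list_sum_const]; ring
  calc ∑ i, ∑ r ∈ Finset.Icc 1 k,
      (1/(2:ℝ)^r) * ((cntLit Ψ i true r : ℝ) + (cntLit Ψ i false r : ℝ))
      = ∑ i, ∑ r ∈ Finset.Icc 1 k,
        ((1/(2:ℝ)^r) * (cntLit Ψ i true r : ℝ) + (1/(2:ℝ)^r) * (cntLit Ψ i false r : ℝ)) := by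
        apply Finset.sum_congr rfl; intro i _
        apply Finset.sum_congr rfl; intro r _; ring
    _ = (Ψ.map (fun C => ((C.lits.map (fun _ => 1/(2:ℝ)^C.lits.length)).sum))).sum := h
    _ = (Ψ.map (fun C => (C.lits.length : ℝ)/2^C.lits.length)).sum := by
        congr 1; exact List.map_congr_left (fun C _ => h2 C)
    _ = ∑ j ∈ Finset.Icc 1 k, ((j:ℝ)/2^j) * (numLen Ψ j : ℝ) := sum_glen Ψ (fun j => (j:ℝ)/2^j)

/-- `bias ≤ 2C`. -/
lemma bias_le (Ψ : List (KClause n k)) :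
    bias Ψ ≤ 2 * ∑ j ∈ Finset.Icc 1 k, ((j:ℝ)/2^j) * (numLen Ψ j : ℝ) := by
  rw [← Qsum, bias_eq, Finset.mul_sum]
  apply Finset.sum_le_sum
  intro i _
  calc |wgt Ψ i| ≤ ∑ r ∈ Finset.Icc 1 k,
      |((cntLit Ψ i true r : ℝ) - (cntLit Ψ i false r : ℝ)) / 2 ^ (r - 1)| :=
        Finset.abs_sum_le_sum_abs _ _
    _ ≤ ∑ r ∈ Finset.Icc 1 k,
        2 * ((1/(2:ℝ)^r) * ((cntLit Ψ i true r : ℝ) + (cntLit Ψ i false r : ℝ))) := by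
        apply Finset.sum_le_sum
        intro r hr
        have hr1 : 1 ≤ r := (Finset.mem_Icc.mp hr).1
        have hpow2 : (2:ℝ)^r = (2:ℝ)^(r-1) * 2 := by
          have h : r - 1 + 1 = r := by omega
          rw [← pow_succ, h]
        have hpos : (0:ℝ) < 2^(r-1) := by positivity
        rw [abs_div, abs_of_pos hpos]
        rw [div_le_iff₀ hpos]
        have habs : |((cntLit Ψ i true r : ℝ) - (cntLit Ψ i false r : ℝ))|
            ≤ (cntLit Ψ i true r : ℝ) + (cntLit Ψ i false r : ℝ) := by
          have h1 : (0:ℝ) ≤ (cntLit Ψ i true r : ℝ) := Nat.cast_nonneg _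
          have h2 : (0:ℝ) ≤ (cntLit Ψ i false r : ℝ) := Nat.cast_nonneg _
          rw [abs_le]; constructor <;> linarith
        rw [hpow2]
        have hpos' : (0:ℝ) < 2^(r-1)*2 := by positivity
        calc |((cntLit Ψ i true r : ℝ) - (cntLit Ψ i false r : ℝ))|
            ≤ (cntLit Ψ i true r : ℝ) + (cntLit Ψ i false r : ℝ) := habs
          _ = (2 * ((1/((2:ℝ)^(r-1)*2)) * ((cntLit Ψ i true r : ℝ) + (cntLit Ψ i false r : ℝ)))) * 2^(r-1) := by
              field_simp
    _ = 2 * ∑ r ∈ Finset.Icc 1 k,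
        ((1/(2:ℝ)^r) * ((cntLit Ψ i true r : ℝ) + (cntLit Ψ i false r : ℝ))) := by
        rw [Finset.mul_sum]

/-- The bias upper bound `maxVal ≤ 2A + C − M + bias/2`. -/
lemma maxVal_le_U1 (Ψ : List (KClause n k)) :
    (maxVal Ψ : ℝ) ≤ 2 * (∑ j ∈ Finset.Icc 1 k, (1 - 1/(2:ℝ)^j) * (numLen Ψ j : ℝ))
      + (∑ j ∈ Finset.Icc 1 k, ((j:ℝ)/2^j) * (numLen Ψ j : ℝ))
      - (∑ j ∈ Finset.Icc 1 k, (numLen Ψ j : ℝ)) + bias Ψ / 2 := by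
  obtain ⟨σ, hσ⟩ := Finset.exists_mem_eq_sup (Finset.univ : Finset (Fin n → Bool))
    Finset.univ_nonempty (fun σ => satCount Ψ σ)
  rw [maxVal, hσ.2]
  -- per-clause bound
  have hclause : ∀ C ∈ Ψ,
      (if C.eval σ then (1:ℝ) else 0)
      ≤ (1 - 2/(2:ℝ)^C.lits.length)
        + 1 * ((C.lits.map (fun l =>
            (2/(2:ℝ)^C.lits.length) * (if σ l.1 = l.2 then (1:ℝ) else 0))).sum)
        + 0 * 0 := by
    intro C _
    have hpos : (0:ℝ) < 2^C.lits.length := by positivity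
    have h2le : (2:ℝ) ≤ 2^C.lits.length := by
      calc (2:ℝ) = 2^1 := by ring
      _ ≤ 2^C.lits.length := pow_le_pow_right₀ one_le_two C.len_pos
    by_cases h : C.eval σ
    · rw [if_pos h]
      obtain ⟨l, hl, hsat⟩ := List.any_eq_true.mp h
      have hsat' : σ l.1 = l.2 := by simpa using hsat
      have hmem : (2/(2:ℝ)^C.lits.length) * (if σ l.1 = l.2 then (1:ℝ) else 0)
          ∈ (C.lits.map (fun l =>
            (2/(2:ℝ)^C.lits.length) * (if σ l.1 = l.2 then (1:ℝ) else 0))) :=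
        List.mem_map.mpr ⟨l, hl, rfl⟩
      have hsum : (2/(2:ℝ)^C.lits.length) ≤ (C.lits.map (fun l =>
            (2/(2:ℝ)^C.lits.length) * (if σ l.1 = l.2 then (1:ℝ) else 0))).sum := by
        have := List.single_le_sum (l := (C.lits.map (fun l =>
            (2/(2:ℝ)^C.lits.length) * (if σ l.1 = l.2 then (1:ℝ) else 0)))) ?_ _ hmem
        · rw [hsat'] at this
          simpa using this
        · intro x hx
          obtain ⟨y, _, rfl⟩ := List.mem_map.mp hx
          positivity
      linarith
    · rw [if_neg h]
      have hall : ∀ l ∈ C.lits, ¬(σ l.1 = l.2) := by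
        intro l hl heq
        exact h (List.any_eq_true.mpr ⟨l, hl, by simp [heq]⟩)
      have hsum : (C.lits.map (fun l =>
            (2/(2:ℝ)^C.lits.length) * (if σ l.1 = l.2 then (1:ℝ) else 0))).sum = 0 := by
        apply List.sum_eq_zero
        intro x hx
        obtain ⟨y, hy, rfl⟩ := List.mem_map.mp hx
        rw [if_neg (hall y hy)]
        ring
      rw [hsum]
      have : 2/(2:ℝ)^C.lits.length ≤ 1 := by
        rw [div_le_one hpos]; exact h2le
      linarith
  have hagg := list_sum_le Ψ _ _ hclause
  rw [← satCount_eq] at hagg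
  rw [list_sum_linear Ψ _ _ (fun _ => (0:ℝ)) 1 0] at hagg
  -- first sum
  have hS1 : (Ψ.map (fun C => 1 - 2/(2:ℝ)^C.lits.length)).sum
      = ∑ j ∈ Finset.Icc 1 k, (1 - 2/(2:ℝ)^j) * (numLen Ψ j : ℝ) :=
    sum_glen Ψ (fun j => 1 - 2/(2:ℝ)^j)
  -- second sum via swap
  have hS2 : (Ψ.map (fun C => (C.lits.map (fun l =>
        (2/(2:ℝ)^C.lits.length) * (if σ l.1 = l.2 then (1:ℝ) else 0))).sum)).sum
      ≤ (∑ j ∈ Finset.Icc 1 k, ((j:ℝ)/2^j) * (numLen Ψ j : ℝ)) + bias Ψ / 2 := by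
    rw [← swap_sum Ψ (fun i b r => (2/(2:ℝ)^r) * (if σ i = b then (1:ℝ) else 0))]
    rw [← Qsum, bias_eq, Finset.sum_div, ← Finset.sum_add_distrib]
    apply Finset.sum_le_sum
    intro i _
    have key : ∀ r ∈ Finset.Icc 1 k,
        ((2/(2:ℝ)^r) * (if σ i = true then (1:ℝ) else 0) * (cntLit Ψ i true r : ℝ)
          + (2/(2:ℝ)^r) * (if σ i = false then (1:ℝ) else 0) * (cntLit Ψ i false r : ℝ))
        ≤ (1/(2:ℝ)^r) * ((cntLit Ψ i true r : ℝ) + (cntLit Ψ i false r : ℝ))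
          + (if σ i = true then (1:ℝ) else -1) *
            (((cntLit Ψ i true r : ℝ) - (cntLit Ψ i false r : ℝ)) / 2 ^ (r - 1)) / 2 := by
      intro r hr
      have hr1 : 1 ≤ r := (Finset.mem_Icc.mp hr).1
      have hpow2 : (2:ℝ)^r = (2:ℝ)^(r-1) * 2 := by
        have h : r - 1 + 1 = r := by omega
        rw [← pow_succ, h]
      have hpos : (0:ℝ) < 2^(r-1) := by positivity
      cases hσi : σ i
      · apply le_of_eq
        simp only [hσi, Bool.false_eq_true, if_false, if_true]
        rw [hpow2]
        field_simp
        ring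
      · apply le_of_eq
        simp only [hσi, Bool.true_eq_false, if_false, if_true]
        rw [hpow2]
        field_simp
        ring
    calc ∑ r ∈ Finset.Icc 1 k, ((2/(2:ℝ)^r) * (if σ i = true then (1:ℝ) else 0) * (cntLit Ψ i true r : ℝ)
          + (2/(2:ℝ)^r) * (if σ i = false then (1:ℝ) else 0) * (cntLit Ψ i false r : ℝ))
        ≤ ∑ r ∈ Finset.Icc 1 k, ((1/(2:ℝ)^r) * ((cntLit Ψ i true r : ℝ) + (cntLit Ψ i false r : ℝ))
          + (if σ i = true then (1:ℝ) else -1) *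
            (((cntLit Ψ i true r : ℝ) - (cntLit Ψ i false r : ℝ)) / 2 ^ (r - 1)) / 2) :=
          Finset.sum_le_sum key
      _ ≤ (∑ r ∈ Finset.Icc 1 k, (1/(2:ℝ)^r) * ((cntLit Ψ i true r : ℝ) + (cntLit Ψ i false r : ℝ)))
          + |wgt Ψ i| / 2 := by
          rw [Finset.sum_add_distrib]
          apply add_le_add_right
          have hw : wgt Ψ i = ∑ r ∈ Finset.Icc 1 k,
              ((cntLit Ψ i true r : ℝ) - (cntLit Ψ i false r : ℝ)) / 2 ^ (r - 1) := rfl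
          have hsum : ∑ r ∈ Finset.Icc 1 k, (if σ i = true then (1:ℝ) else -1) *
              (((cntLit Ψ i true r : ℝ) - (cntLit Ψ i false r : ℝ)) / 2 ^ (r - 1)) / 2
              = (if σ i = true then (1:ℝ) else -1) * wgt Ψ i / 2 := by
            rw [hw, Finset.mul_sum, Finset.sum_div]
          rw [hsum]
          have h1 : (if σ i = true then (1:ℝ) else -1) * wgt Ψ i ≤ |wgt Ψ i| := by
            cases hσi : σ i
            · simp only [Bool.false_eq_true, if_false, neg_one_mul]
              exact neg_le_abs _
            · simp only [if_true, one_mul]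
              exact le_abs_self _
          linarith
  have hS1' : (Ψ.map (fun C => 1 - 2/(2:ℝ)^C.lits.length)).sum
      = 2 * (∑ j ∈ Finset.Icc 1 k, (1 - 1/(2:ℝ)^j) * (numLen Ψ j : ℝ))
        - (∑ j ∈ Finset.Icc 1 k, (numLen Ψ j : ℝ)) := by
    rw [hS1, Finset.mul_sum, ← Finset.sum_sub_distrib]
    apply Finset.sum_congr rfl
    intro j _
    ring
  have hz : (Ψ.map (fun _ : KClause n k => (0:ℝ))).sum = 0 := by simp
  rw [hS1', hz] at hagg
  linarith [hagg, hS2]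

lemma two_mul_le_two_pow (j : ℕ) (hj : 1 ≤ j) : 2*j ≤ 2^j := by
  induction j with
  | zero => omega
  | succ i ih =>
    rcases Nat.eq_zero_or_pos i with h | h
    · subst h; norm_num
    · have h2 : 2 ≤ 2^i := by
        calc 2 = 2^1 := rfl
        _ ≤ 2^i := Nat.pow_le_pow_right (by norm_num) h
      have := ih h
      rw [pow_succ]
      omega

lemma sum_coeff_le (Ψ : List (KClause n k)) (f g : ℕ → ℝ)
    (h : ∀ j, 1 ≤ j → j ≤ k → f j ≤ g j) :
    (∑ j ∈ Finset.Icc 1 k, f j * (numLen Ψ j : ℝ))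
      ≤ ∑ j ∈ Finset.Icc 1 k, g j * (numLen Ψ j : ℝ) := by
  apply Finset.sum_le_sum
  intro j hj
  obtain ⟨h1, h2⟩ := Finset.mem_Icc.mp hj
  exact mul_le_mul_of_nonneg_right (h j h1 h2) (Nat.cast_nonneg _)

lemma fact_MA (Ψ : List (KClause n k)) :
    (∑ j ∈ Finset.Icc 1 k, (numLen Ψ j : ℝ))/2
      ≤ ∑ j ∈ Finset.Icc 1 k, (1 - 1/(2:ℝ)^j) * (numLen Ψ j : ℝ) := by
  rw [Finset.sum_div]
  rw [Finset.sum_congr rfl (fun j _ => by ring :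
    ∀ j ∈ Finset.Icc 1 k, (numLen Ψ j : ℝ)/2 = (1/2) * (numLen Ψ j : ℝ))]
  apply sum_coeff_le
  intro j h1 _
  have hp : (0:ℝ) < 2^j := by positivity
  have h2j : (2:ℝ) ≤ 2^j := by
    calc (2:ℝ) = 2^1 := (pow_one 2).symm
    _ ≤ 2^j := pow_le_pow_right₀ one_le_two h1
  have := one_div_le_one_div_of_le two_pos h2j
  linarith

lemma fact_AM (Ψ : List (KClause n k)) :
    (∑ j ∈ Finset.Icc 1 k, (1 - 1/(2:ℝ)^j) * (numLen Ψ j : ℝ))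
      ≤ ∑ j ∈ Finset.Icc 1 k, (numLen Ψ j : ℝ) := by
  rw [Finset.sum_congr rfl (fun j _ => (one_mul _).symm :
    ∀ j ∈ Finset.Icc 1 k, (numLen Ψ j : ℝ) = 1 * (numLen Ψ j : ℝ))]
  apply sum_coeff_le
  intro j _ _
  have hp : (0:ℝ) < 2^j := by positivity
  have : 0 < 1/(2:ℝ)^j := by positivity
  linarith

lemma fact_CM (Ψ : List (KClause n k)) :
    (∑ j ∈ Finset.Icc 1 k, ((j:ℝ)/2^j) * (numLen Ψ j : ℝ))
      ≤ (∑ j ∈ Finset.Icc 1 k, (numLen Ψ j : ℝ))/2 := by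
  rw [Finset.sum_div]
  rw [Finset.sum_congr rfl (fun j _ => by ring :
    ∀ j ∈ Finset.Icc 1 k, (numLen Ψ j : ℝ)/2 = (1/2) * (numLen Ψ j : ℝ))]
  apply sum_coeff_le
  intro j h1 _
  have hp : (0:ℝ) < 2^j := by positivity
  rw [div_le_div_iff₀ hp two_pos]
  have := two_mul_le_two_pow j h1
  have hcast : (2:ℝ)*j ≤ 2^j := by exact_mod_cast this
  linarith

lemma fact_C0 (Ψ : List (KClause n k)) :
    0 ≤ ∑ j ∈ Finset.Icc 1 k, ((j:ℝ)/2^j) * (numLen Ψ j : ℝ) := by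
  apply Finset.sum_nonneg
  intro j _
  positivity

lemma fact_CA (Ψ : List (KClause n k)) :
    (∑ j ∈ Finset.Icc 1 k, ((j:ℝ)/2^j) * (numLen Ψ j : ℝ))
      ≤ ∑ j ∈ Finset.Icc 1 k, (1 - 1/(2:ℝ)^j) * (numLen Ψ j : ℝ) := by
  apply sum_coeff_le
  intro j h1 _
  have hp : (0:ℝ) < 2^j := by positivity
  have : (j:ℝ) + 1 ≤ 2^j := by exact_mod_cast Nat.lt_two_pow_self (n := j)
  rw [div_le_iff₀ hp, ← sub_nonneg]
  have heq : (1 - 1/(2:ℝ)^j) * 2^j - j = 2^j - 1 - j := by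
    field_simp
  rw [heq]
  linarith

lemma fact_bias0 (Ψ : List (KClause n k)) : 0 ≤ bias Ψ := by
  rw [bias_eq]
  apply Finset.sum_nonneg
  intro i _
  exact abs_nonneg _

lemma D_eq (Ψ : List (KClause n k)) :
    ∑ j ∈ Finset.Icc 2 k, (((2:ℝ)^j - (j:ℝ) - 1)/2^(j-2)) * (numLen Ψ j : ℝ)
      = 4 * ((∑ j ∈ Finset.Icc 1 k, (1 - 1/(2:ℝ)^j) * (numLen Ψ j : ℝ))
           - ∑ j ∈ Finset.Icc 1 k, ((j:ℝ)/2^j) * (numLen Ψ j : ℝ)) := by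
  have h1 : 4 * ((∑ j ∈ Finset.Icc 1 k, (1 - 1/(2:ℝ)^j) * (numLen Ψ j : ℝ))
           - ∑ j ∈ Finset.Icc 1 k, ((j:ℝ)/2^j) * (numLen Ψ j : ℝ))
      = ∑ j ∈ Finset.Icc 1 k, (4*((2:ℝ)^j - j - 1)/2^j) * (numLen Ψ j : ℝ) := by
    rw [← Finset.sum_sub_distrib, Finset.mul_sum]
    apply Finset.sum_congr rfl
    intro j _
    have hp : (0:ℝ) < 2^j := by positivity
    field_simp
    ring
  rw [h1]
  rcases Nat.eq_zero_or_pos k with hk | hk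
  · subst hk
    rw [show Finset.Icc 1 0 = ∅ from rfl, show Finset.Icc 2 0 = ∅ from by decide]
    simp
  · have hins : Finset.Icc 1 k = insert 1 (Finset.Icc 2 k) := by
      ext x
      simp only [Finset.mem_Icc, Finset.mem_insert]
      omega
    rw [hins, Finset.sum_insert (by simp [Finset.mem_Icc])]
    have h0 : (4*((2:ℝ)^1 - (1:ℕ) - 1)/2^1) * (numLen Ψ 1 : ℝ) = 0 := by norm_num
    rw [h0, zero_add]
    apply Finset.sum_congr rfl
    intro j hj
    have hj2 : 2 ≤ j := (Finset.mem_Icc.mp hj).1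
    have hpow : (2:ℝ)^j = 2^(j-2) * 4 := by
      have h : j - 2 + 2 = j := by omega
      calc (2:ℝ)^j = 2^(j-2+2) := by rw [h]
      _ = 2^(j-2)*2^2 := by rw [pow_add]
      _ = 2^(j-2)*4 := by norm_num
    have hpos : (0:ℝ) < 2^(j-2) := by positivity
    rw [hpow]
    congr 1
    field_simp

end MaxKSatAux


namespace MaxKSatArith

lemma L2 (s M A C : ℝ) (hs2 : s^2 = 1/2) (hsu : s ≤ 0.7072)
    (hC1 : C ≤ M/2) (hC0 : 0 ≤ C) :
    4*s*M*(A-C) ≤ 4*A*(A-C) + (2*M-2*A-C)^2 := by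
  have hM0 : 0 ≤ M := by linarith
  have hsM : s^2*M^2 = 1/2*M^2 := by rw [hs2]
  have h7 : (0:ℝ) ≤ (7/2-4*s)*M - C := by
    have := mul_nonneg (by linarith : (0:ℝ) ≤ 3-4*s) hM0
    nlinarith
  nlinarith [sq_nonneg (4*A - (2+s)*M),
    mul_nonneg (by linarith : (0:ℝ) ≤ M/2 - C) h7, hsM]

lemma L1 (s M A C : ℝ) (hs2 : s^2 = 1/2) (hsl : 0.707 ≤ s) (hsu : s ≤ 0.7072)
    (hC0 : 0 ≤ C) (hC1 : C ≤ M/2)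
    (h4 : (4+4*s)*A + (2-4*s)*C ≤ 4*M) :
    0 ≤ 2*A+2*C-8*s*A-4*s*C+4*s*M := by
  have hM0 : 0 ≤ M := by linarith
  have hsM : s^2*M^2 = 1/2*M^2 := by rw [hs2]
  have hsC : s^2*C^2 = 1/2*C^2 := by rw [hs2]
  have hsMC : s^2*(M*C) = 1/2*(M*C) := by rw [hs2]
  nlinarith [mul_le_mul_of_nonneg_left h4 (show (0:ℝ) ≤ 8*s-2 by linarith),
    mul_nonneg (show (0:ℝ) ≤ M/2-C by linarith) (show (0:ℝ) ≤ 20-16*s by linarith),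
    hsM, hsC, hsMC, mul_nonneg hM0 hC0]

lemma L1a (s M A C b : ℝ) (hs2 : s^2 = 1/2) (hsl : 0.707 ≤ s) (hsu : s ≤ 0.7072)
    (hb0 : 0 ≤ b) (hb2C : b ≤ 2*C)
    (hU1 : 2*A+C-M+b/2 ≤ M) (hA1 : M/2 ≤ A) (hC1 : C ≤ M/2) (hC0 : 0 ≤ C) :
    0 ≤ 4*A*(4*(A-C)) + b^2 - 4*(4*(A-C))*(s*(2*A+C-M+b/2)) := by
  have hsAC : s^2*(A-C)^2 = 1/2*(A-C)^2 := by rw [hs2]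
  by_cases hh : 0 ≤ 2*A+2*C-8*s*A-4*s*C+4*s*M
  · have hD0 : (0:ℝ) ≤ A - C := by nlinarith
    nlinarith [sq_nonneg (b - 4*s*(A-C)), mul_nonneg hD0 hh, hsAC]
  · have hb4 : 4*M-4*A-2*C < s*(4*(A-C)) := by
      by_contra hcon
      push_neg at hcon
      exact hh (L1 s M A C hs2 hsl hsu hC0 hC1 (by nlinarith))
    have hbb4 : b ≤ 4*M-4*A-2*C := by linarith
    have hprod : 0 ≤ ((4*M-4*A-2*C) - b) * (2*s*(4*(A-C)) - b - (4*M-4*A-2*C)) :=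
      mul_nonneg (by linarith) (by linarith)
    have hG := L2 s M A C hs2 hsu hC1 hC0
    nlinarith [hprod, hG]

lemma L1b (s M A C b q : ℝ) (hs2 : s^2 = 1/2) (hsl : 0.707 ≤ s) (hsu : s ≤ 0.7072)
    (hb0 : 0 ≤ b) (hAC : C ≤ A)
    (hU1 : M ≤ 2*A+C-M+b/2) (hA1 : M/2 ≤ A) (hA2 : A ≤ M) (hC1 : C ≤ M/2) (hC0 : 0 ≤ C)
    (hq : b^2 ≤ q * (4*(4*(A-C)))) (hq0 : 0 ≤ q) :
    s*M ≤ A + q := by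
  have hM0 : 0 ≤ M := by linarith
  have hsM := mul_le_mul_of_nonneg_right hsu hM0
  by_cases hb1 : 4*M-4*A-2*C ≤ 0
  · nlinarith
  · have hbge : 4*M-4*A-2*C ≤ b := by linarith
    have hG := L2 s M A C hs2 hsu hC1 hC0
    have hsq : (4*M-4*A-2*C)^2 ≤ b^2 := by nlinarith
    by_cases hD0 : A - C ≤ 0
    · -- then b = 0 ≥ 4M-4A-2C > 0, contradiction with hq? b^2 ≤ q*16(A-C) ≤ 0 so b = 0
      have : b^2 ≤ 0 := by nlinarith
      nlinarith
    · push_neg at hD0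
      nlinarith [hG, hsq, hq, mul_pos hD0 hD0]

end MaxKSatArith

namespace MaxKSatArith2

lemma end1a (s δ ε val A Cq M b q Q : ℝ)
    (hεeq : ε = 8*δ) (hδ0 : 0 ≤ δ) (hse : 0 ≤ s - ε)
    (hup1 : val ≤ 2*A + Cq - M + b/2)
    (hsU1 : s*(2*A+Cq-M+b/2) ≤ A + q)
    (hvq : (1-4*δ)*q ≤ Q)
    (hqC : q ≤ Cq/2) (hC0 : 0 ≤ Cq)
    (hU1C : Cq ≤ 2*A + Cq - M + b/2) :
    (s-ε)*val ≤ A + Q := by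
  nlinarith [mul_le_mul_of_nonneg_left hup1 hse,
    mul_le_mul_of_nonneg_left hU1C (by linarith : (0:ℝ) ≤ 8*δ),
    mul_le_mul_of_nonneg_left hqC hδ0]

lemma end1b (s δ ε val A M q Q : ℝ)
    (hεeq : ε = 8*δ) (hδ0 : 0 ≤ δ) (hse : 0 ≤ s - ε)
    (hup0 : val ≤ M) (hM0 : 0 ≤ M)
    (hcore : s*M ≤ A + q)
    (hvq : (1-4*δ)*q ≤ Q)
    (hqM : q ≤ M) :
    (s-ε)*val ≤ A + Q := by
  nlinarith [mul_le_mul_of_nonneg_left hup0 hse,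
    mul_le_mul_of_nonneg_left hqM hδ0, mul_nonneg hδ0 hM0]

lemma end2a (s δ ε val U A Cq b r D : ℝ)
    (hεeq : ε = 8*δ) (hδ0 : 0 ≤ δ) (hδu : δ ≤ 0.00125) (hse : 0 ≤ s - ε)
    (hval : val ≤ U) (hsU1 : s*U ≤ A + r)
    (hgap : A + r - δ^2*D ≤ Cq + b/2)
    (hU1C : Cq ≤ U) (hD3C : D ≤ 3*Cq) (hb2C : b ≤ 2*Cq) (hC0 : 0 ≤ Cq) :
    (s-ε)*val ≤ Cq + (1-2*δ)*b/2 := by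
  nlinarith [mul_le_mul_of_nonneg_left hval hse,
    mul_le_mul_of_nonneg_left hU1C (by linarith : (0:ℝ) ≤ 8*δ),
    mul_le_mul_of_nonneg_left hb2C hδ0,
    mul_le_mul_of_nonneg_left hD3C (by positivity : (0:ℝ) ≤ δ^2),
    mul_le_mul_of_nonneg_left (show δ*Cq ≤ Cq by nlinarith) hδ0]

lemma end2b (s δ ε val U Cq b : ℝ)
    (hεeq : ε = 8*δ) (hδ0 : 0 ≤ δ) (hse : 0 ≤ s - ε)
    (hval : val ≤ U) (hcore : s*U ≤ Cq + b/2)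
    (hU1C : Cq ≤ U) (hb2C : b ≤ 2*Cq) (hC0 : 0 ≤ Cq) :
    (s-ε)*val ≤ Cq + (1-2*δ)*b/2 := by
  nlinarith [mul_le_mul_of_nonneg_left hval hse,
    mul_le_mul_of_nonneg_left hU1C (by linarith : (0:ℝ) ≤ 8*δ),
    mul_le_mul_of_nonneg_left hb2C hδ0]

lemma end2c (s δ ε val A Cq M b : ℝ)
    (hεeq : ε = 8*δ) (hδ0 : 0 ≤ δ) (hδu : δ ≤ 0.00125) (hse : 0 ≤ s - ε)
    (hsu : s ≤ 0.7072)
    (hval : val ≤ M) (hM0 : 0 ≤ M)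
    (hb1 : 4*M - 4*A - 2*Cq ≤ b)
    (hb2 : (1-2*δ)*(4*(A-Cq)) ≤ b)
    (hC1 : Cq ≤ M/2) (hC0 : 0 ≤ Cq)
    (hACM : A - Cq ≤ M) (hCA : 0 ≤ A - Cq) (hbM : b ≤ M) :
    (s-ε)*val ≤ Cq + (1-2*δ)*b/2 := by
  nlinarith [mul_le_mul_of_nonneg_left hval hse,
    mul_le_mul_of_nonneg_left hACM (by linarith : (0:ℝ) ≤ 2*δ),
    mul_le_mul_of_nonneg_left hbM hδ0,
    mul_nonneg (by linarith : (0:ℝ) ≤ 3/4 - s + 5*δ) hM0,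
    mul_nonneg hδ0 hM0]

end MaxKSatArith2

namespace MaxKSatArith2
lemma sqrt_bounds (s : ℝ) (hs0 : 0 ≤ s) (hs2 : s^2 = 1/2) :
    0.707 ≤ s ∧ s ≤ 0.7072 := by constructor <;> nlinarith

lemma bB_lemma (δ b B : ℝ) (hδ0 : 0 ≤ δ) (hδu : δ ≤ 1) (hb0 : 0 ≤ b)
    (hB2 : B ≤ (1+δ)*b) : (1-δ)*B ≤ b := by
  nlinarith [mul_le_mul_of_nonneg_left hB2 (by linarith : (0:ℝ) ≤ 1-δ),
    mul_nonneg (mul_nonneg hδ0 hδ0) hb0]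

lemma eta_half (δ B D : ℝ) (hδ0 : 0 ≤ δ) (hδu : δ ≤ 1) (hB0 : 0 ≤ B)
    (hcase : B ≤ (1-δ)*D) (hDnn : 0 ≤ D) : (1-δ)*B ≤ 1/2*(2*D) := by
  nlinarith [mul_le_mul_of_nonneg_left hcase (by linarith : (0:ℝ) ≤ 1-δ),
    mul_nonneg (mul_nonneg hδ0 (by linarith : (0:ℝ) ≤ 2-δ)) hDnn]

lemma qb_lemma (b D : ℝ) (hb0 : 0 ≤ b) (hbD : b ≤ D) : b^2*4 ≤ b*(4*D) := by
  nlinarith [mul_nonneg hb0 (show (0:ℝ) ≤ D - b by linarith)]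

lemma vq_lemma (δ b B : ℝ) (hδ0 : 0 ≤ δ) (hδu : δ ≤ 1) (hb0 : 0 ≤ b)
    (hB1 : (1-δ)*b ≤ B) : (1-4*δ)*b^2 ≤ (1-δ)^2*B^2 := by
  have hsq := mul_self_le_mul_self (mul_nonneg (show (0:ℝ) ≤ 1-δ by linarith) hb0) hB1
  nlinarith [mul_le_mul_of_nonneg_left hsq (sq_nonneg (1-δ)),
    mul_nonneg (mul_nonneg (sq_nonneg δ) (sq_nonneg b))
      (show (0:ℝ) ≤ 6-4*δ+δ^2 by nlinarith)]

lemma endD0 (s ε val A : ℝ) (h : s - ε ≤ 1) (hval0 : 0 ≤ val) (hvalA : val ≤ A) :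
    (s-ε)*val ≤ A := by
  nlinarith [mul_le_mul_of_nonneg_right h hval0]

lemma bDlow (δ b B D : ℝ) (hδ0 : 0 ≤ δ) (hDnn : 0 ≤ D)
    (hB2 : B ≤ (1+δ)*b) (hcase : (1-δ)*D < B) : (1-2*δ)*D ≤ b := by
  by_contra hc
  push_neg at hc
  nlinarith [mul_lt_mul_of_pos_left hc (show (0:ℝ) < 1+δ by linarith),
    mul_nonneg (mul_nonneg hδ0 hδ0) hDnn]

lemma vlow_lemma (δ b B : ℝ) (hδ0 : 0 ≤ δ) (hδu : δ ≤ 1) (hb0 : 0 ≤ b)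
    (hB1 : (1-δ)*b ≤ B) : (1-2*δ)*b/2 ≤ (1-δ)*B/2 := by
  nlinarith [mul_le_mul_of_nonneg_left hB1 (show (0:ℝ) ≤ 1-δ by linarith),
    mul_nonneg (mul_nonneg hδ0 hδ0) hb0]

lemma gap2 (δ b D : ℝ) (hδ0 : 0 ≤ δ) (hD0 : 0 < D)
    (h1 : (1-2*δ)*D ≤ b) (h2 : b ≤ D) : (b-D)^2/(4*D) ≤ δ^2*D := by
  rw [div_le_iff₀ (by linarith : (0:ℝ) < 4*D)]
  nlinarith [sq_nonneg (b-D), mul_nonneg (mul_nonneg hδ0 hδ0) (mul_nonneg hD0.le hD0.le)]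

lemma D3C_lemma (δ b D Cq : ℝ) (hδ0 : 0 ≤ δ) (hδu : δ ≤ 0.00125)
    (h1 : (1-2*δ)*D ≤ b) (hb2C : b ≤ 2*Cq) (hDnn : 0 ≤ D) : D ≤ 3*Cq := by
  nlinarith [mul_le_mul_of_nonneg_right hδu hDnn]

lemma core2b_lemma (s M A Cq b : ℝ) (hsl : 0.707 ≤ s) (hsu : s ≤ 0.7072)
    (hA14 : A ≤ M/2 + Cq/4) (hDb : 4*(A-Cq) ≤ b)
    (hC1 : Cq ≤ M/2) (hC0 : 0 ≤ Cq) (hM0 : 0 ≤ M) :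
    s*(2*A+Cq-M+b/2) ≤ Cq + b/2 := by
  nlinarith [mul_nonneg (show (0:ℝ) ≤ 1-s by linarith) (show (0:ℝ) ≤ b - 4*(A-Cq) by linarith),
    mul_le_mul_of_nonneg_left hA14 (show (0:ℝ) ≤ 4*s-2 by linarith),
    mul_le_mul_of_nonneg_left hC1 (show (0:ℝ) ≤ 1/2 by norm_num)]
end MaxKSatArith2



set_option maxHeartbeats 1000000
open MaxKSatAux MaxKSatArith MaxKSatArith2

/-- Correctness analysis of Algorithm 4 (Theorem 1.2): the `(√2/2 − ε)`-approximation
for `Max-kSAT`. Given `B ∈ (1 ± δ)·bias(Ψ)` with `δ = ε/8`, and with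
`D = Σ_{j=2}^k ((2^j − j − 1)/2^{j−2})·m_j`, the output `v` satisfies
`v ≤ val_Ψ` and `v ≥ (√2/2 − ε)·val_Ψ`. (When `D = 0`, `B²/D` is `0` by the
convention that division by zero is zero.) -/
theorem alg_maxksat_correct {n k : ℕ} (Ψ : List (KClause n k))
    (ε δ B D v : ℝ) (hε : ε ∈ Set.Ioo (0 : ℝ) 0.01) (hδ : δ = ε / 8)
    (hD : D = ∑ j ∈ Finset.Icc 2 k,
      (((2 : ℝ) ^ j - (j : ℝ) - 1) / 2 ^ (j - 2)) * (numLen Ψ j : ℝ))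
    (hB1 : (1 - δ) * bias Ψ ≤ B) (hB2 : B ≤ (1 + δ) * bias Ψ)
    (hv : v = if B ≤ (1 - δ) * D
              then ∑ j ∈ Finset.Icc 1 k, (1 - 1 / (2 : ℝ) ^ j) * (numLen Ψ j : ℝ)
                     + (1 - δ) ^ 2 * B ^ 2 / (4 * D)
              else ∑ j ∈ Finset.Icc 1 k, ((j : ℝ) / 2 ^ j) * (numLen Ψ j : ℝ)
                     + (1 - δ) * B / 2) :
    v ≤ (maxVal Ψ : ℝ) ∧ (Real.sqrt 2 / 2 - ε) * (maxVal Ψ : ℝ) ≤ v := by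
  classical
  obtain ⟨hε0, hε1⟩ := hε
  have hε1' : ε < 0.01 := hε1
  set s : ℝ := Real.sqrt 2 / 2 with hsdef
  set A := ∑ j ∈ Finset.Icc 1 k, (1 - 1/(2:ℝ)^j) * (numLen Ψ j : ℝ) with hAdef
  set Cq := ∑ j ∈ Finset.Icc 1 k, ((j:ℝ)/2^j) * (numLen Ψ j : ℝ) with hCdef
  set M := ∑ j ∈ Finset.Icc 1 k, (numLen Ψ j : ℝ) with hMdef
  set b := bias Ψ with hbdef
  set val := ((maxVal Ψ : ℝ)) with hvaldef
  have hA1 : M/2 ≤ A := fact_MA Ψ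
  have hA2 : A ≤ M := fact_AM Ψ
  have hC1 : Cq ≤ M/2 := fact_CM Ψ
  have hC0 : 0 ≤ Cq := fact_C0 Ψ
  have hCA : Cq ≤ A := fact_CA Ψ
  have hM0 : 0 ≤ M := by linarith
  have hb0 : 0 ≤ b := fact_bias0 Ψ
  have hb2C : b ≤ 2*Cq := by
    have := bias_le Ψ
    rw [← hbdef, ← hCdef] at this
    linarith
  have hDeq : D = 4*(A - Cq) := by rw [hD]; exact D_eq Ψ
  have hDnn : 0 ≤ D := by rw [hDeq]; linarith
  have hup0 : val ≤ M := maxVal_le_M Ψ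
  have hup1 : val ≤ 2*A + Cq - M + b/2 := by
    have := maxVal_le_U1 Ψ
    rw [← hAdef, ← hCdef, ← hMdef, ← hbdef, ← hvaldef] at this
    linarith
  have hlow : ∀ η : ℝ, 0 ≤ η → η ≤ 1/2 → A + η*b - η^2*(4*(A-Cq)) ≤ val := by
    intro η h0 h1
    have := lower_bound Ψ η h0 h1
    rw [← hAdef, ← hCdef, ← hbdef, ← hvaldef] at this
    linarith
  have hval0 : 0 ≤ val := hvaldef ▸ Nat.cast_nonneg _
  have hs0 : 0 ≤ s := by rw [hsdef]; positivity
  have hs2 : s^2 = 1/2 := by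
    rw [hsdef, div_pow, Real.sq_sqrt (by norm_num : (0:ℝ) ≤ 2)]
    norm_num
  obtain ⟨hsl, hsu⟩ := sqrt_bounds s hs0 hs2
  have hδ0 : 0 ≤ δ := by rw [hδ]; linarith
  have hδu : δ ≤ 0.00125 := by rw [hδ]; linarith
  have hεeq : ε = 8*δ := by rw [hδ]; ring
  have hse : 0 ≤ s - ε := by linarith
  have h1δ : (0:ℝ) < 1 - δ := by linarith
  have hB0 : 0 ≤ B := le_trans (mul_nonneg h1δ.le hb0) hB1
  have hbB : (1-δ)*B ≤ b := bB_lemma δ b B hδ0 (by linarith) hb0 hB2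
  by_cases hcase : B ≤ (1-δ)*D
  · -- Branch 1
    rw [hv, if_pos hcase]
    rcases eq_or_lt_of_le hDnn with hD0 | hD0
    · -- D = 0
      have hD0' : D = 0 := hD0.symm
      have hB00 : B = 0 := le_antisymm (by rw [hD0'] at hcase; linarith) hB0
      have hb00 : b = 0 := by
        have h1 : (1-δ)*b ≤ (1-δ)*0 := by rw [hB00] at hB1; linarith
        have h2 := le_of_mul_le_mul_left h1 h1δ
        linarith
      have hACeq : A = Cq := by rw [hDeq] at hD0'; linarith
      have hveq : (1-δ)^2*B^2/(4*D) = 0 := by rw [hB00]; simp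
      rw [hveq, add_zero]
      refine ⟨by simpa using hlow 0 le_rfl (by norm_num), ?_⟩
      have hvalA : val ≤ A := by rw [hb00] at hup1; linarith
      exact endD0 s ε val A (by linarith) hval0 hvalA
    · -- 0 < D
      set η := (1-δ)*B/(2*D) with hηdef
      have hη0 : 0 ≤ η := div_nonneg (mul_nonneg h1δ.le hB0) (by linarith)
      have hη1 : η ≤ 1/2 := by
        rw [hηdef, div_le_iff₀ (by linarith : (0:ℝ) < 2*D)]
        exact eta_half δ B D hδ0 (by linarith) hB0 hcase hDnn
      have hQeq : η*((1-δ)*B) - η^2*(4*(A-Cq)) = (1-δ)^2*B^2/(4*D) := by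
        rw [hηdef, ← hDeq]
        field_simp
        ring
      have hbD : b ≤ D := le_of_mul_le_mul_left (hB1.trans hcase) h1δ
      constructor
      · have hlb := hlow η hη0 hη1
        have hmono : η*((1-δ)*B) ≤ η*b := mul_le_mul_of_nonneg_left hbB hη0
        linarith [hQeq]
      · set q := b^2/(4*D) with hqdef
        have hq0 : 0 ≤ q := div_nonneg (sq_nonneg b) (by linarith)
        have hqb : q ≤ b/4 := by
          rw [hqdef, div_le_div_iff₀ (by linarith) (by norm_num : (0:ℝ) < 4)]
          exact qb_lemma b D hb0 hbD
        have hqC : q ≤ Cq/2 := by linarith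
        have hvq : (1-4*δ)*q ≤ (1-δ)^2*B^2/(4*D) := by
          have hnum := vq_lemma δ b B hδ0 (by linarith) hb0 hB1
          rw [hqdef, ← mul_div_assoc]
          gcongr
        by_cases hU : 2*A + Cq - M + b/2 ≤ M
        · have hcore := L1a s M A Cq b hs2 hsl hsu hb0 hb2C hU hA1 hC1 hC0
          have hsU1 : s*(2*A+Cq-M+b/2) ≤ A + q := by
            have h4D : (0:ℝ) < 4*D := by linarith
            have hACpos : (0:ℝ) < A - Cq := by
              have h' : (0:ℝ) < 4*(A-Cq) := hDeq ▸ hD0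
              linarith
            have hne : A - Cq ≠ 0 := ne_of_gt hACpos
            have hiden : A + q - s*(2*A+Cq-M+b/2)
                = (4*A*(4*(A-Cq)) + b^2 - 4*(4*(A-Cq))*(s*(2*A+Cq-M+b/2)))/(4*D) := by
              rw [hqdef, hDeq]
              field_simp
            have hpos := div_nonneg hcore (le_of_lt h4D)
            linarith [hpos, hiden]
          exact end1a s δ ε val A Cq M b q _ hεeq hδ0 hse hup1 hsU1 hvq hqC hC0
            (by linarith)
        · push_neg at hU
          have hq4D : b^2 ≤ q * (4*(4*(A-Cq))) := by
            have h : q*(4*D) = b^2 := by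
              rw [hqdef]
              field_simp
            rw [hDeq] at h
            linarith
          have hcore := L1b s M A Cq b q hs2 hsl hsu hb0 hCA (le_of_lt hU) hA1 hA2 hC1 hC0 hq4D hq0
          exact end1b s δ ε val A M q _ hεeq hδ0 hse hup0 hM0 hcore hvq (by linarith)
  · -- Branch 2
    push_neg at hcase
    rw [hv, if_neg (not_le.mpr hcase)]
    have hbDlow : (1-2*δ)*D ≤ b := bDlow δ b B D hδ0 hDnn hB2 hcase
    have hvlow : (1-2*δ)*b/2 ≤ (1-δ)*B/2 := vlow_lemma δ b B hδ0 (by linarith) hb0 hB1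
    constructor
    · have hlb := hlow (1/2) (by norm_num) le_rfl
      linarith [hlb, hbB]
    · by_cases hU : 2*A + Cq - M + b/2 ≤ M
      · by_cases hbD : b ≤ D
        · rcases eq_or_lt_of_le hDnn with hD0 | hD0
          · exfalso
            have hDz : D = 0 := hD0.symm
            have hbz : b ≤ 0 := by rw [hDz] at hbD; exact hbD
            have hb00 : b = 0 := le_antisymm hbz hb0
            rw [hb00] at hB2
            rw [hDz] at hcase
            have h1 : B ≤ 0 := by linarith [hB2]
            have h2 : (0:ℝ) < B := by linarith [hcase]
            linarith
          · have hcore := L1a s M A Cq b hs2 hsl hsu hb0 hb2C hU hA1 hC1 hC0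
            have h4D : (0:ℝ) < 4*D := by linarith
            have hsU1 : s*(2*A+Cq-M+b/2) ≤ A + b^2/(4*D) := by
              have hACpos : (0:ℝ) < A - Cq := by
                have h' : (0:ℝ) < 4*(A-Cq) := hDeq ▸ hD0
                linarith
              have hne : A - Cq ≠ 0 := ne_of_gt hACpos
              have hiden : A + b^2/(4*D) - s*(2*A+Cq-M+b/2)
                  = (4*A*(4*(A-Cq)) + b^2 - 4*(4*(A-Cq))*(s*(2*A+Cq-M+b/2)))/(4*D) := by
                rw [hDeq]
                field_simp
              have hpos := div_nonneg hcore (le_of_lt h4D)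
              linarith [hpos, hiden]
            have hgap : A + b^2/(4*D) - δ^2*D ≤ Cq + b/2 := by
              have hAeq : A = Cq + D/4 := by rw [hDeq]; ring
              have hident : Cq + b/2 - (A + b^2/(4*D)) = -((b-D)^2/(4*D)) := by
                rw [hAeq]
                field_simp
                ring
              have hdd := gap2 δ b D hδ0 (by linarith) hbDlow hbD
              linarith
            have hD3C := D3C_lemma δ b D Cq hδ0 hδu hbDlow hb2C hDnn
            have h2a := end2a s δ ε val (2*A+Cq-M+b/2) A Cq b (b^2/(4*D)) D hεeq hδ0
              hδu hse hup1 hsU1 hgap (by linarith) hD3C hb2C hC0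
            linarith [hvlow]
        · push_neg at hbD
          rw [hDeq] at hbD
          have hA14 : A ≤ M/2 + Cq/4 := by linarith
          have hcore := core2b_lemma s M A Cq b hsl hsu hA14 (le_of_lt hbD) hC1 hC0 hM0
          have h2b := end2b s δ ε val (2*A+Cq-M+b/2) Cq b hεeq hδ0 hse hup1 hcore
            (by linarith) hb2C hC0
          linarith [hvlow]
      · push_neg at hU
        rw [hDeq] at hbDlow
        have hb1 : 4*M - 4*A - 2*Cq ≤ b := by linarith
        have h2c := end2c s δ ε val A Cq M b hεeq hδ0 hδu hse hsu hup0 hM0 hb1 hbDlow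
          hC1 hC0 (by linarith) (by linarith) (by linarith)
        linarith [hvlow]
end
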